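/- arXiv:1306.0714 — 4 statements merged into one kernel-verified Lean document; each statement's English description precedes it below -/
import Mathlib

section
/- If P is a complex polynomial of degree exactly n ≥ 1 all of whose zeros lie in |z| ≤ 1, then for every R > 1 and every z with |z| = 1, one has |P(Rz)| ≥ ((R + 1)/2)ⁿ · |P(z)|. -/
open Polynomial Real

/-- The `ℬₙ`-operator with parameters `l0, l1, l2`:
`B[P](z) = λ₀·P(z) + λ₁·(nz/2)·P′(z) + (λ₂/2)·(nz/2)²·P″(z)`. -/
noncomputable def Bop (n : ℕ) (l0 l1 l2 : ℂ) (P : Polynomial ℂ) : Polynomial ℂ :=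
  Polynomial.C l0 * P
    + Polynomial.C (l1 * ((n : ℂ) / 2)) * (Polynomial.X * derivative P)
    + Polynomial.C (l2 / 2 * ((n : ℂ) / 2) ^ 2)
        * (Polynomial.X ^ 2 * derivative (derivative P))

/-- Every zero of `U(z) = λ₀ + λ₁·n·z + λ₂·(n(n−1)/2)·z²` lies in the
half-plane `|z| ≤ |z − n/2|`. -/
def AdmissibleParams (n : ℕ) (l0 l1 l2 : ℂ) : Prop :=
  ∀ z : ℂ, l0 + l1 * (n : ℂ) * z + l2 * ((n : ℂ) * ((n : ℂ) - 1) / 2) * z ^ 2 = 0 →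
    ‖z‖ ≤ ‖z - (n : ℂ) / 2‖

/-- `Λₙ = λ₀ + λ₁·n²/2 + λ₂·n³(n−1)/8`. -/
noncomputable def Lam (n : ℕ) (l0 l1 l2 : ℂ) : ℂ :=
  l0 + l1 * (n : ℂ) ^ 2 / 2 + l2 * (n : ℂ) ^ 3 * ((n : ℂ) - 1) / 8

/-- The polynomial `z ↦ P(Rz)`, i.e. `P ∘ σ` with `σ(z) = Rz`. -/
noncomputable def dilate (R : ℝ) (P : Polynomial ℂ) : Polynomial ℂ :=
  P.comp (Polynomial.C (R : ℂ) * Polynomial.X)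

/-- `‖f‖_p = ((1/2π) ∫₀^{2π} |f(e^{iθ})|^p dθ)^{1/p}`. -/
noncomputable def circNorm (p : ℝ) (f : ℂ → ℂ) : ℝ :=
  ((2 * π)⁻¹ * ∫ θ in (0:ℝ)..(2 * π),
      ‖f (Complex.exp (θ * Complex.I))‖ ^ p) ^ (1 / p)

/-- `min_{|z|=1} |f(z)|`. -/
noncomputable def minModulus (f : ℂ → ℂ) : ℝ :=
  sInf ((fun z => ‖f z‖) '' {z : ℂ | ‖z‖ = 1})

/-- `max_{|z|=1} |f(z)|`. -/
noncomputable def maxModulus (f : ℂ → ℂ) : ℝ :=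
  sSup ((fun z => ‖f z‖) '' {z : ℂ | ‖z‖ = 1})

/-- The conjugate-reciprocal polynomial `Q*(z) = zⁿ·conj(Q(1/conj z))`,
whose `j`-th coefficient is the conjugate of the `(n−j)`-th coefficient of `Q`. -/
noncomputable def conjRecip (n : ℕ) (Q : Polynomial ℂ) : Polynomial ℂ :=
  (Q.map (starRingEnd ℂ)).reflect n

lemma key_root (R : ℝ) (hR : 1 < R) (z w : ℂ) (hz : ‖z‖ = 1)
    (hw : ‖w‖ ≤ 1) :
    (R + 1) / 2 * ‖z - w‖ ≤ ‖(R : ℂ) * z - w‖ := by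
  have hz2 : z.re ^ 2 + z.im ^ 2 = 1 := by
    have h : Complex.normSq z = 1 := by rw [← Complex.sq_norm, hz]; norm_num
    simpa [Complex.normSq_apply, sq] using h
  have hw2 : w.re ^ 2 + w.im ^ 2 ≤ 1 := by
    have h : Complex.normSq w ≤ 1 := by
      rw [← Complex.sq_norm]
      calc ‖w‖ ^ 2 ≤ 1 ^ 2 := by
            exact pow_le_pow_left₀ (norm_nonneg w) hw 2
        _ = 1 := one_pow 2
    simpa [Complex.normSq_apply, sq] using h
  have hts : (z.re * w.re + z.im * w.im) ^ 2 ≤ w.re ^ 2 + w.im ^ 2 := by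
    nlinarith [sq_nonneg (z.re * w.im - z.im * w.re), hz2]
  have htl : -1 ≤ z.re * w.re + z.im * w.im := by
    nlinarith [sq_nonneg (z.re * w.re + z.im * w.im + 1)]
  have h1 : ‖z - w‖ ^ 2
      = 1 - 2 * (z.re * w.re + z.im * w.im) + (w.re ^ 2 + w.im ^ 2) := by
    rw [Complex.sq_norm, Complex.normSq_apply]
    simp only [Complex.sub_re, Complex.sub_im]
    nlinarith [hz2]
  have h2 : ‖(R : ℂ) * z - w‖ ^ 2
      = R ^ 2 - 2 * R * (z.re * w.re + z.im * w.im) + (w.re ^ 2 + w.im ^ 2) := by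
    rw [Complex.sq_norm, Complex.normSq_apply]
    simp only [Complex.sub_re, Complex.sub_im, Complex.mul_re, Complex.mul_im,
      Complex.ofReal_re, Complex.ofReal_im]
    nlinarith [hz2]
  have hsq : ((R + 1) / 2 * ‖z - w‖) ^ 2
      ≤ ‖(R : ℂ) * z - w‖ ^ 2 := by
    rw [mul_pow, h1, h2]
    nlinarith [mul_nonneg (mul_nonneg (by linarith : (0:ℝ) ≤ R - 1)
        (by linarith : (0:ℝ) ≤ R + 3))
        (by linarith : (0:ℝ) ≤ 1 - (w.re ^ 2 + w.im ^ 2)),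
      mul_nonneg (sq_nonneg (R - 1))
        (by linarith : (0:ℝ) ≤ 1 + (z.re * w.re + z.im * w.im))]
  have h0 : 0 ≤ (R + 1) / 2 * ‖z - w‖ :=
    mul_nonneg (by linarith) (norm_nonneg _)
  nlinarith [norm_nonneg ((R : ℂ) * z - w), hsq, h0]

lemma pow_card_mul_prod' (c : ℝ) (f : ℂ → ℝ) (s : Multiset ℂ) :
    c ^ s.card * (s.map f).prod = (s.map (fun w => c * f w)).prod := by
  induction s using Multiset.induction_on with
  | empty => simp
  | cons a s ih =>
    simp only [Multiset.map_cons, Multiset.prod_cons, Multiset.card_cons, pow_succ]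
    rw [← ih]; ring

lemma prod_key (R : ℝ) (hR : 1 < R) (z : ℂ) (hz : ‖z‖ = 1)
    (s : Multiset ℂ) (hs : ∀ w ∈ s, ‖w‖ ≤ 1) :
    (s.map (fun w => (R + 1) / 2 * ‖z - w‖)).prod
      ≤ (s.map (fun w => ‖(R : ℂ) * z - w‖)).prod := by
  induction s using Multiset.induction_on with
  | empty => simp
  | cons a s ih =>
    simp only [Multiset.map_cons, Multiset.prod_cons]
    have ha : ‖a‖ ≤ 1 := hs a (Multiset.mem_cons_self a s)
    have hih := ih (fun w hw => hs w (Multiset.mem_cons_of_mem hw))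
    have hnn : 0 ≤ (s.map (fun w => (R + 1) / 2 * ‖z - w‖)).prod :=
      Multiset.prod_nonneg (by
        intro x hx
        obtain ⟨w, _, rfl⟩ := Multiset.mem_map.mp hx
        exact mul_nonneg (by linarith) (norm_nonneg _))
    exact mul_le_mul (key_root R hR z a hz ha) hih hnn (norm_nonneg _)

/-- Lemma 2 of the paper. -/
theorem growth_of_polynomial_with_zeros_in_disk
    (n : ℕ) (hn : 1 ≤ n) (P : Polynomial ℂ) (hdeg : P.degree = (n : ℕ))
    (hP : ∀ z : ℂ, P.IsRoot z → ‖z‖ ≤ 1)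
    (R : ℝ) (hR : 1 < R) (z : ℂ) (hz : ‖z‖ = 1) :
    ((R + 1) / 2) ^ n * ‖P.eval z‖
      ≤ ‖P.eval ((R : ℂ) * z)‖ := by
  
  have hsplits : P.Splits := IsAlgClosed.splits P
  have hfac := hsplits.eq_prod_roots
  have hcard : P.roots.card = n := by
    rw [splits_iff_card_roots.mp hsplits, natDegree_eq_of_degree_eq_some hdeg]
  have hroots : ∀ w ∈ P.roots, ‖w‖ ≤ 1 := fun w hw =>
    hP w (isRoot_of_mem_roots hw)
  have heval : ∀ x : ℂ, P.eval x
      = P.leadingCoeff * (P.roots.map (fun w => x - w)).prod := by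
    intro x
    conv_lhs => rw [hfac]
    simp [eval_multiset_prod, Multiset.map_map, Function.comp]
  have habs : ∀ x : ℂ, ‖P.eval x‖
      = ‖P.leadingCoeff‖
        * (P.roots.map (fun w => ‖x - w‖)).prod := by
    intro x
    rw [heval x, norm_mul]
    exact congrArg _ ((map_multiset_prod (normHom : ℂ →*₀ ℝ) _).trans (by rw [Multiset.map_map]; rfl))
  rw [habs z, habs ((R : ℂ) * z)]
  rw [← mul_assoc, mul_comm (((R+1)/2)^n) (‖P.leadingCoeff‖), mul_assoc]
  apply mul_le_mul_of_nonneg_left _ (norm_nonneg _)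
  rw [← hcard, pow_card_mul_prod']
  exact prod_key R hR z hz P.roots hroots
end

section
/- If A, B, C are non-negative real numbers such that B + C ≤ A, then for each real number γ one has |(A − C)·e^{iγ} + (B + C)| ≤ |A·e^{iγ} + B|, where the absolute values are moduli of complex numbers. -/
/-- Lemma 7 of the paper, on complex moduli. -/
theorem rotation_modulus_inequality
    (A B C : ℝ) (hA : 0 ≤ A) (hB : 0 ≤ B) (hC : 0 ≤ C) (h : B + C ≤ A) (γ : ℝ) :
    ‖((A - C : ℝ) : ℂ) * Complex.exp (γ * Complex.I) + ((B + C : ℝ) : ℂ)‖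
      ≤ ‖(A : ℂ) * Complex.exp (γ * Complex.I) + (B : ℂ)‖ := by
  have key : ∀ x y : ℝ, ‖(x : ℂ) * Complex.exp (γ * Complex.I) + (y : ℂ)‖
      = Real.sqrt (x ^ 2 + y ^ 2 + 2 * x * y * Real.cos γ) := by
    intro x y
    rw [Complex.norm_def, Complex.normSq_apply]
    congr 1
    simp [Complex.exp_mul_I, Complex.cos_ofReal_re, Complex.add_re, Complex.add_im,
      Complex.mul_re, Complex.mul_im, Complex.sin_ofReal_re]
    have := Real.sin_sq_add_cos_sq γ
    ring_nf
    nlinarith [Real.sin_sq_add_cos_sq γ]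
  rw [key, key]
  apply Real.sqrt_le_sqrt
  nlinarith [mul_nonneg (mul_nonneg hC (by linarith : (0:ℝ) ≤ A - B - C)) (by linarith [Real.cos_le_one γ] : (0:ℝ) ≤ 1 - Real.cos γ)]
end

section
/- Let n ≥ 1, let λ₀, λ₁, λ₂ be complex numbers such that every zero of U(z) = λ₀ + λ₁·n·z + λ₂·(n(n−1)/2)·z² lies in the half-plane |z| ≤ |z − n/2|, and let B be the associated operator of the class ℬ_n. If P is a complex polynomial of degree at most n with no zero in |z| < 1, then for every complex number α with |α| ≤ 1, every R > 1, and every z with |z| < 1, one has the strict inequality | B[P∘σ](z) − α·B[P](z) | < | B[P*∘σ]*(z) − conj(α)·B[P*]*(z) |, where B[P*∘σ]*(z) := (B[P*∘σ](z))* and B[P*]*(z) := (B[P*](z))*. -/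
open Polynomial Real

/-- compatibility: absolute value on `ℂ` given by the norm. -/
noncomputable def Complex.abs : AbsoluteValue ℂ ℝ :=
  IsAbsoluteValue.toAbsoluteValue (norm : ℂ → ℝ)

theorem Complex.norm_eq_abs (z : ℂ) : ‖z‖ = Complex.abs z := rfl

theorem Complex.sq_abs (z : ℂ) : Complex.abs z ^ 2 = Complex.normSq z := Complex.sq_norm z

theorem Complex.abs_ofReal (r : ℝ) : Complex.abs (r : ℂ) = |r| := Complex.norm_real r

theorem Complex.abs_conj (z : ℂ) : Complex.abs ((starRingEnd ℂ) z) = Complex.abs z :=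
  Complex.norm_conj z

theorem Complex.abs_natCast (n : ℕ) : Complex.abs (n : ℂ) = n := Complex.norm_natCast n

@[simp]
theorem Complex.abs_two : Complex.abs 2 = 2 := Complex.norm_two

theorem Complex.abs_re_le_abs (z : ℂ) : |z.re| ≤ Complex.abs z := Complex.abs_re_le_norm z

theorem Complex.re_le_abs (z : ℂ) : z.re ≤ Complex.abs z := Complex.re_le_norm z

theorem Complex.normSq_eq_abs (z : ℂ) : Complex.normSq z = Complex.abs z ^ 2 :=
  Complex.normSq_eq_norm_sq z

namespace BnAux

-- squared-norm identity for the Möbius disk argument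
lemma normSq_disk_identity (a u : ℂ) (ρ : ℝ) :
    Complex.normSq ((↑(Complex.normSq a - ρ^2) : ℂ) - (starRingEnd ℂ) a * u) -
      ρ^2 * Complex.normSq u
      = (Complex.normSq a - ρ^2) * (Complex.normSq (u - a) - ρ^2) := by
  simp only [Complex.normSq_apply, Complex.sub_re, Complex.sub_im, Complex.mul_re,
    Complex.mul_im, Complex.conj_re, Complex.conj_im, Complex.ofReal_re, Complex.ofReal_im]
  ring

lemma abs_sq_eq (z : ℂ) : (Complex.abs z)^2 = Complex.normSq z := Complex.sq_abs z

lemma disk_iff {a u : ℂ} {ρ : ℝ} (hρ : 0 ≤ ρ) (hK : ρ < Complex.abs a) :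
    Complex.abs ((↑(Complex.normSq a - ρ^2) : ℂ) - (starRingEnd ℂ) a * u) ≤ ρ * Complex.abs u
    ↔ Complex.abs (u - a) ≤ ρ := by
  have hK0 : 0 < Complex.normSq a - ρ^2 := by
    have := Complex.sq_abs a
    nlinarith [Complex.abs.nonneg a]
  have key := normSq_disk_identity a u ρ
  constructor
  · intro h
    have h2 : (Complex.abs ((↑(Complex.normSq a - ρ^2) : ℂ) - (starRingEnd ℂ) a * u))^2 ≤
        (ρ * Complex.abs u)^2 := by
      apply pow_le_pow_left₀ (Complex.abs.nonneg _) h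
    rw [abs_sq_eq, mul_pow, abs_sq_eq] at h2
    have : Complex.normSq (u - a) - ρ^2 ≤ 0 := by nlinarith
    have : (Complex.abs (u-a))^2 ≤ ρ^2 := by rw [abs_sq_eq]; linarith
    exact le_of_pow_le_pow_left₀ (by norm_num) hρ this
  · intro h
    have h2 : (Complex.abs (u-a))^2 ≤ ρ^2 := by
      apply pow_le_pow_left₀ (Complex.abs.nonneg _) h
    rw [abs_sq_eq] at h2
    have h3 : Complex.normSq ((↑(Complex.normSq a - ρ^2) : ℂ) - (starRingEnd ℂ) a * u) ≤
        ρ^2 * Complex.normSq u := by nlinarith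
    have := abs_sq_eq ((↑(Complex.normSq a - ρ^2) : ℂ) - (starRingEnd ℂ) a * u)
    have h4 : (Complex.abs ((↑(Complex.normSq a - ρ^2) : ℂ) - (starRingEnd ℂ) a * u))^2 ≤
        (ρ * Complex.abs u)^2 := by rw [this, mul_pow, abs_sq_eq]; exact h3
    exact le_of_pow_le_pow_left₀ (by norm_num) (by positivity) h4


lemma multiset_avg_bound (M : Multiset ℂ) (g : ℂ) (f : ℂ → ℂ) (r : ℝ) (hr : 0 ≤ r)
    (h : ∀ t ∈ M, Complex.abs (f t - g) ≤ r) :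
    Complex.abs ((M.map f).sum - (M.card : ℂ) * g) ≤ (M.card : ℝ) * r := by
  induction M using Multiset.induction_on with
  | empty => simp
  | cons a M ih =>
    simp only [Multiset.map_cons, Multiset.sum_cons, Multiset.card_cons]
    have h1 : Complex.abs (f a - g) ≤ r := h a (Multiset.mem_cons_self a M)
    have h2 := ih (fun t ht => h t (Multiset.mem_cons_of_mem ht))
    push_cast
    have heq : f a + (M.map f).sum - ((M.card : ℂ) + 1) * g
        = (f a - g) + ((M.map f).sum - (M.card : ℂ) * g) := by push_cast; ring
    rw [heq]
    calc Complex.abs _ ≤ Complex.abs (f a - g) +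
          Complex.abs ((M.map f).sum - (M.card : ℂ) * g) := Complex.abs.add_le _ _
      _ ≤ r + (M.card : ℝ) * r := add_le_add h1 h2
      _ = ((M.card : ℝ) + 1) * r := by ring

lemma avg_inv_mem {c x τ : ℂ} {ρ : ℝ} (hρ : 0 < ρ) (hx : ρ < Complex.abs (x - c))
    (M : Multiset ℂ) (hM : ∀ t ∈ M, Complex.abs (t - c) ≤ ρ) (hM0 : M ≠ 0)
    (heq : (M.map (fun t => (x - t)⁻¹)).sum = (M.card : ℂ) * (x - τ)⁻¹) :
    Complex.abs (τ - c) ≤ ρ := by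
  set a := x - c with ha
  set K := Complex.normSq a - ρ^2 with hKdef
  have hK0 : 0 < K := by
    have := Complex.sq_abs a
    nlinarith [Complex.abs.nonneg a]
  have habsK : Complex.abs (K:ℂ) = K := by rw [Complex.abs_ofReal, abs_of_pos hK0]
  have hexpand : ∀ u : ℂ, u ≠ 0 → u⁻¹ - (starRingEnd ℂ) a / K
      = ((↑K : ℂ) - (starRingEnd ℂ) a * u) / ((K : ℂ) * u) := by
    intro u hu
    have hKc : (K:ℂ) ≠ 0 := by exact_mod_cast hK0.ne'
    rw [eq_div_iff (mul_ne_zero hKc hu)]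
    field_simp
  have hmem : ∀ t ∈ M, Complex.abs ((x - t)⁻¹ - (starRingEnd ℂ) a / K) ≤ ρ / K := by
    intro t ht
    have hut : Complex.abs ((x - t) - a) ≤ ρ := by
      have h3 : (x - t) - a = c - t := by rw [ha]; ring
      rw [h3, Complex.abs.map_sub]; exact hM t ht
    have hu0 : (x - t) ≠ 0 := by
      intro h0
      rw [h0, zero_sub, Complex.abs.map_neg] at hut
      exact absurd hut (not_le.mpr hx)
    have habs0 : 0 < Complex.abs (x - t) := Complex.abs.pos hu0
    have hd := (disk_iff hρ.le hx).mpr hut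
    rw [hexpand _ hu0, map_div₀, map_mul, habsK]
    rw [div_le_div_iff₀ (by positivity) hK0]
    calc Complex.abs ((↑K : ℂ) - (starRingEnd ℂ) a * (x - t)) * K
        ≤ (ρ * Complex.abs (x - t)) * K := by gcongr
      _ = ρ * (K * Complex.abs (x - t)) := by ring
  have hsum := multiset_avg_bound M ((starRingEnd ℂ) a / K) (fun t => (x - t)⁻¹) (ρ / K)
    (by positivity) hmem
  rw [heq] at hsum
  have hm0 : 0 < (M.card : ℝ) := by exact_mod_cast Multiset.card_pos.mpr hM0
  have hone : Complex.abs ((x - τ)⁻¹ - (starRingEnd ℂ) a / K) ≤ ρ / K := by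
    have h4 : (M.card : ℂ) * (x - τ)⁻¹ - (M.card : ℂ) * ((starRingEnd ℂ) a / K)
        = (M.card : ℂ) * ((x - τ)⁻¹ - (starRingEnd ℂ) a / K) := by ring
    rw [h4, map_mul, Complex.abs_natCast] at hsum
    exact le_of_mul_le_mul_left hsum hm0
  have hu0 : x - τ ≠ 0 := by
    intro h0
    rw [h0] at hone
    simp only [inv_zero, zero_sub, Complex.abs.map_neg, map_div₀, Complex.abs_conj, habsK] at hone
    rw [div_le_div_iff₀ hK0 hK0] at hone
    have : Complex.abs a ≤ ρ := by nlinarith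
    exact absurd this (not_le.mpr hx)
  have habs0 : 0 < Complex.abs (x - τ) := Complex.abs.pos hu0
  have hd : Complex.abs ((↑K : ℂ) - (starRingEnd ℂ) a * (x - τ)) ≤ ρ * Complex.abs (x - τ) := by
    rw [hexpand _ hu0, map_div₀, map_mul, habsK, div_le_div_iff₀ (by positivity) hK0] at hone
    nlinarith
  have hres := (disk_iff hρ.le hx).mp hd
  have h3 : (x - τ) - a = c - τ := by rw [ha]; ring
  rw [h3, Complex.abs.map_sub] at hres
  exact hres


-- elementary symmetric function facts
lemma esymm_cons (a : ℂ) (s : Multiset ℂ) (k : ℕ) :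
    (a ::ₘ s).esymm (k+1) = s.esymm (k+1) + a * s.esymm k := by
  unfold Multiset.esymm
  rw [Multiset.powersetCard_cons, Multiset.map_add, Multiset.sum_add]
  congr 1
  rw [Multiset.map_map, ← Multiset.sum_map_mul_left]
  apply congrArg
  apply Multiset.map_congr rfl
  intro t _
  simp [Multiset.prod_cons]

lemma esymm_one_eq_sum (s : Multiset ℂ) : s.esymm 1 = s.sum := by
  induction s using Multiset.induction_on with
  | empty => simp [Multiset.esymm, Multiset.powersetCard_zero_right]
  | cons a s ih =>
    rw [esymm_cons, ih, Multiset.sum_cons]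
    have h0 : s.esymm 0 = 1 := by
      simp [Multiset.esymm, Multiset.powersetCard_zero_left]
    rw [h0]
    ring

lemma two_esymm_two (s : Multiset ℂ) :
    2 * s.esymm 2 = s.sum ^ 2 - (s.map (fun t => t^2)).sum := by
  induction s using Multiset.induction_on with
  | empty => simp [Multiset.esymm, Multiset.powersetCard_zero_right]
  | cons a s ih =>
    rw [esymm_cons, Multiset.sum_cons, Multiset.map_cons, Multiset.sum_cons,
      esymm_one_eq_sum]
    rw [mul_add] at *
    rw [ih]
    ring

-- eval of product of (X - t)
lemma eval_prod_lin (M : Multiset ℂ) (x : ℂ) :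
    eval x ((M.map (fun t => X - C t)).prod) = (M.map (fun t => x - t)).prod := by
  rw [eval_multiset_prod, Multiset.map_map]
  congr 1
  apply Multiset.map_congr rfl
  intro t _
  simp

lemma eval_prod_lin_ne_zero {M : Multiset ℂ} {x : ℂ} (h : ∀ t ∈ M, x ≠ t) :
    eval x ((M.map (fun t => X - C t)).prod) ≠ 0 := by
  rw [eval_prod_lin]
  apply Multiset.prod_ne_zero
  intro h0
  rw [Multiset.mem_map] at h0
  obtain ⟨t, ht, h0⟩ := h0
  exact h t ht (by linear_combination h0)

lemma eval_derivative_prod_lin (M : Multiset ℂ) (x : ℂ) (h : ∀ t ∈ M, x ≠ t) :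
    eval x (derivative ((M.map (fun t => X - C t)).prod))
      = eval x ((M.map (fun t => X - C t)).prod) * (M.map (fun t => (x - t)⁻¹)).sum := by
  induction M using Multiset.induction_on with
  | empty => simp
  | cons a M ih =>
    have ha : x - a ≠ 0 := sub_ne_zero.mpr (h a (Multiset.mem_cons_self a M))
    simp only [Multiset.map_cons, Multiset.prod_cons, Multiset.sum_cons]
    rw [derivative_mul, eval_add, eval_mul, eval_mul,
      ih (fun t ht => h t (Multiset.mem_cons_of_mem ht))]
    simp only [derivative_sub, derivative_X, derivative_C, sub_zero, eval_one, eval_sub,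
      eval_X, eval_C]
    field_simp
    simp only [eval_sub, eval_mul, eval_X, eval_C]
    ring

lemma eval_derivative2_prod_lin (M : Multiset ℂ) (x : ℂ) (h : ∀ t ∈ M, x ≠ t) :
    eval x (derivative (derivative ((M.map (fun t => X - C t)).prod)))
      = eval x ((M.map (fun t => X - C t)).prod) *
          (((M.map (fun t => (x - t)⁻¹)).sum)^2 - (M.map (fun t => ((x - t)⁻¹)^2)).sum) := by
  induction M using Multiset.induction_on with
  | empty => simp
  | cons a M ih =>
    have ha : x - a ≠ 0 := sub_ne_zero.mpr (h a (Multiset.mem_cons_self a M))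
    have h' : ∀ t ∈ M, x ≠ t := fun t ht => h t (Multiset.mem_cons_of_mem ht)
    simp only [Multiset.map_cons, Multiset.prod_cons, Multiset.sum_cons]
    rw [derivative_mul]
    simp only [derivative_sub, derivative_X, derivative_C, sub_zero, one_mul]
    rw [derivative_add, derivative_mul]
    simp only [derivative_sub, derivative_X, derivative_C, sub_zero, one_mul]
    rw [eval_add, eval_add, eval_mul]
    simp only [eval_sub, eval_X, eval_C]
    rw [eval_derivative_prod_lin M x h', ih h', eval_mul]
    simp only [eval_sub, eval_X, eval_C]
    field_simp
    ring


lemma prod_map_nonneg (M : Multiset ℂ) (f : ℂ → ℝ) (h : ∀ t ∈ M, 0 ≤ f t) :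
    0 ≤ (M.map f).prod := by
  apply Multiset.prod_nonneg
  intro x hx
  rw [Multiset.mem_map] at hx
  obtain ⟨t, ht, rfl⟩ := hx
  exact h t ht

lemma prod_map_le (M : Multiset ℂ) (f g : ℂ → ℝ) (h : ∀ t ∈ M, 0 ≤ f t ∧ f t ≤ g t) :
    (M.map f).prod ≤ (M.map g).prod := by
  induction M using Multiset.induction_on with
  | empty => simp
  | cons a M ih =>
    simp only [Multiset.map_cons, Multiset.prod_cons]
    have ha := h a (Multiset.mem_cons_self a M)
    have h' := fun t ht => h t (Multiset.mem_cons_of_mem ht)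
    have hf : 0 ≤ (M.map f).prod := prod_map_nonneg M f (fun t ht => (h' t ht).1)
    exact mul_le_mul ha.2 (ih h') hf (ha.1.trans ha.2)

lemma prod_map_lt (M : Multiset ℂ) (hM : M ≠ 0) (f g : ℂ → ℝ)
    (h : ∀ t ∈ M, 0 ≤ f t ∧ f t < g t) :
    (M.map f).prod < (M.map g).prod := by
  induction M using Multiset.induction_on with
  | empty => exact absurd rfl hM
  | cons a M ih =>
    simp only [Multiset.map_cons, Multiset.prod_cons]
    have ha := h a (Multiset.mem_cons_self a M)
    have h' := fun t ht => h t (Multiset.mem_cons_of_mem ht)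
    rcases eq_or_ne M 0 with rfl | hM0
    · simpa using ha.2
    · have hf : 0 ≤ (M.map f).prod := prod_map_nonneg M f (fun t ht => (h' t ht).1)
      exact mul_lt_mul'' ha.2 (ih hM0 h') ha.1 hf

lemma one_le_prod_map (M : Multiset ℂ) (f : ℂ → ℝ) (h : ∀ t ∈ M, 1 ≤ f t) :
    1 ≤ (M.map f).prod := by
  induction M using Multiset.induction_on with
  | empty => simp
  | cons a M ih =>
    simp only [Multiset.map_cons, Multiset.prod_cons]
    have ha := h a (Multiset.mem_cons_self a M)
    have h2 := ih (fun t ht => h t (Multiset.mem_cons_of_mem ht))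
    nlinarith

lemma roots_card (Q : Polynomial ℂ) : Q.roots.card = Q.natDegree :=
  Polynomial.splits_iff_card_roots.mp (IsAlgClosed.splits Q)

lemma factorization (Q : Polynomial ℂ) :
    Q = C Q.leadingCoeff * (Q.roots.map (fun w => X - C w)).prod :=
  (Polynomial.C_leadingCoeff_mul_prod_multiset_X_sub_C (roots_card Q)).symm

lemma eval_prod_lin' (M : Multiset ℂ) (x : ℂ) :
    eval x ((M.map (fun t => X - C t)).prod) = (M.map (fun t => x - t)).prod := by
  rw [eval_multiset_prod, Multiset.map_map]
  apply congrArg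
  apply Multiset.map_congr rfl
  intro t _
  simp

lemma abs_eval (Q : Polynomial ℂ) (x : ℂ) :
    Complex.abs (Q.eval x)
      = Complex.abs Q.leadingCoeff * ((Q.roots.map (fun w => Complex.abs (x - w))).prod) := by
  conv_lhs => rw [factorization Q]
  rw [eval_mul, eval_C, map_mul, eval_prod_lin', map_multiset_prod, Multiset.map_map]
  rfl


lemma Lam_ne_zero {n : ℕ} (hn : 1 ≤ n) {l0 l1 l2 : ℂ} (hB : AdmissibleParams n l0 l1 l2) :
    Lam n l0 l1 l2 ≠ 0 := by
  intro h
  rw [Lam] at h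
  have hU : l0 + l1 * (n:ℂ) * ((n:ℂ)/2) + l2 * ((n:ℂ) * ((n:ℂ) - 1) / 2) * ((n:ℂ)/2)^2 = 0 := by
    linear_combination h
  have h2 := hB ((n:ℂ)/2) hU
  simp only [sub_self, map_zero, norm_zero] at h2
  have h3 : Complex.abs ((n:ℂ)/2) = 0 := le_antisymm h2 (Complex.abs.nonneg _)
  have h4 : (n:ℂ)/2 = 0 := Complex.abs.eq_zero.mp h3
  have h5 : (n:ℂ) = 0 := by linear_combination 2 * h4
  have : n = 0 := by exact_mod_cast h5
  omega

lemma abs_l0_le_Lam {n : ℕ} (hn : 1 ≤ n) {l0 l1 l2 : ℂ} (hB : AdmissibleParams n l0 l1 l2) :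
    Complex.abs l0 ≤ Complex.abs (Lam n l0 l1 l2) := by
  obtain ⟨a1, ha1⟩ : ∃ a1 : ℂ, a1 = l1 * (n:ℂ) := ⟨_, rfl⟩
  obtain ⟨a2, ha2⟩ : ∃ a2 : ℂ, a2 = l2 * ((n:ℂ) * ((n:ℂ) - 1) / 2) := ⟨_, rfl⟩
  have hB' : ∀ z : ℂ, l0 + a1 * z + a2 * z^2 = 0 →
      Complex.abs z ≤ Complex.abs (z - (n:ℂ)/2) := by
    intro z hz
    apply hB z
    rw [ha1, ha2] at hz
    linear_combination hz
  have hLam : Lam n l0 l1 l2 = l0 + a1 * ((n:ℂ)/2) + a2 * ((n:ℂ)/2)^2 := by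
    rw [Lam, ha1, ha2]; ring
  rw [hLam]
  rcases eq_or_ne a2 0 with h2 | h2
  · rcases eq_or_ne a1 0 with h1 | h1
    · rw [h1, h2]; simp
    · -- linear case
      obtain ⟨τ, hτ⟩ : ∃ τ : ℂ, τ = -l0 / a1 := ⟨_, rfl⟩
      have hl0 : l0 = -(a1 * τ) := by rw [hτ]; field_simp
      have hroot := hB' τ (by rw [h2]; linear_combination hl0)
      have hee : l0 + a1 * ((n:ℂ)/2) + a2 * ((n:ℂ)/2)^2 = a1 * ((n:ℂ)/2 - τ) := by
        rw [h2]; linear_combination hl0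
      rw [hee, hl0, map_neg_eq_map, map_mul, map_mul]
      apply mul_le_mul_of_nonneg_left ?_ (Complex.abs.nonneg a1)
      rw [Complex.abs.map_sub ((n:ℂ)/2)]
      exact hroot
  · -- quadratic case
    obtain ⟨d, hd⟩ := IsAlgClosed.exists_pow_nat_eq (a1^2 - 4*a2*l0) (zero_lt_two)
    obtain ⟨τ1, hτ1⟩ : ∃ τ1 : ℂ, τ1 = (-a1 + d) / (2*a2) := ⟨_, rfl⟩
    obtain ⟨τ2, hτ2⟩ : ∃ τ2 : ℂ, τ2 = (-a1 - d) / (2*a2) := ⟨_, rfl⟩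
    have hA : l0 = a2 * (τ1 * τ2) := by
      rw [hτ1, hτ2, div_mul_div_comm]
      rw [show (-a1 + d) * (-a1 - d) = a1^2 - d^2 by ring, hd]
      field_simp
      ring
    have hBn : a1 = -(a2 * (τ1 + τ2)) := by
      rw [hτ1, hτ2]
      field_simp
      ring
    have hr1 := hB' τ1 (by linear_combination hA + τ1 * hBn)
    have hr2 := hB' τ2 (by linear_combination hA + τ2 * hBn)
    have hee : l0 + a1 * ((n:ℂ)/2) + a2 * ((n:ℂ)/2)^2
        = a2 * (((n:ℂ)/2 - τ1) * ((n:ℂ)/2 - τ2)) := by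
      linear_combination hA + ((n:ℂ)/2) * hBn
    rw [hee, hA, map_mul, map_mul, map_mul, map_mul]
    apply mul_le_mul_of_nonneg_left ?_ (Complex.abs.nonneg a2)
    have hr1' : Complex.abs τ1 ≤ Complex.abs ((n:ℂ)/2 - τ1) := by
      rw [Complex.abs.map_sub]; exact hr1
    have hr2' : Complex.abs τ2 ≤ Complex.abs ((n:ℂ)/2 - τ2) := by
      rw [Complex.abs.map_sub]; exact hr2
    exact mul_le_mul hr1' hr2' (Complex.abs.nonneg _) (Complex.abs.nonneg _)

lemma abs_one_sub_lt {α : ℂ} (hα : Complex.abs α ≤ 1) {x : ℝ} (hx : 1 < x) :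
    Complex.abs (1 - α) < Complex.abs ((x:ℂ) - α) := by
  have hre : α.re ≤ 1 := by
    calc α.re ≤ |α.re| := le_abs_self _
      _ ≤ Complex.abs α := Complex.abs_re_le_abs α
      _ ≤ 1 := hα
  have key : Complex.normSq ((x:ℂ) - α) - Complex.normSq (1 - α)
      = (x - 1) * (x + 1 - 2 * α.re) := by
    simp only [Complex.normSq_apply, Complex.sub_re, Complex.sub_im, Complex.one_re,
      Complex.one_im, Complex.ofReal_re, Complex.ofReal_im]
    ring
  have h1 : Complex.normSq (1 - α) < Complex.normSq ((x:ℂ) - α) := by nlinarith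
  have h2 : (Complex.abs (1 - α))^2 < (Complex.abs ((x:ℂ) - α))^2 := by
    rw [Complex.sq_abs, Complex.sq_abs]; exact h1
  exact lt_of_pow_lt_pow_left₀ 2 (Complex.abs.nonneg _) h2

lemma factor_lt {R : ℝ} (hR : 1 < R) {v z : ℂ} (hv : Complex.abs v ≤ 1)
    (hz : 1 ≤ Complex.abs z) :
    Complex.abs (z - v) < Complex.abs ((R:ℂ) * z - v) := by
  have hrm : (z * (starRingEnd ℂ) v).re ≤ Complex.abs z * Complex.abs v := by
    calc (z * (starRingEnd ℂ) v).re ≤ Complex.abs (z * (starRingEnd ℂ) v) := Complex.re_le_abs _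
      _ = Complex.abs z * Complex.abs v := by rw [map_mul, Complex.abs_conj]
  have key : Complex.normSq ((R:ℂ) * z - v) - Complex.normSq (z - v)
      = (R^2 - 1) * Complex.normSq z - 2*(R - 1) * (z * (starRingEnd ℂ) v).re := by
    simp only [Complex.normSq_apply, Complex.sub_re, Complex.sub_im, Complex.mul_re,
      Complex.mul_im, Complex.ofReal_re, Complex.ofReal_im, Complex.conj_re, Complex.conj_im]
    ring
  have habsz : Complex.abs z ^ 2 = Complex.normSq z := Complex.sq_abs z
  have hvz : Complex.abs z * Complex.abs v ≤ Complex.abs z := by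
    nlinarith [Complex.abs.nonneg z]
  have h5 : (z * (starRingEnd ℂ) v).re ≤ Complex.abs z := hrm.trans hvz
  have hzpos : (0:ℝ) < Complex.abs z := by linarith
  have h6 : 2 * Complex.abs z < (R+1) * (Complex.abs z * Complex.abs z) := by
    nlinarith [mul_le_mul_of_nonneg_left hz (by positivity : (0:ℝ) ≤ (R+1) * Complex.abs z),
      mul_pos (by linarith : (0:ℝ) < R - 1) hzpos]
  have h1 : Complex.normSq (z - v) < Complex.normSq ((R:ℂ) * z - v) := by
    nlinarith [mul_lt_mul_of_pos_left h6 (by linarith : (0:ℝ) < R - 1),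
      mul_le_mul_of_nonneg_left h5 (by linarith : (0:ℝ) ≤ 2*(R-1))]
  have h2 : (Complex.abs (z - v))^2 < (Complex.abs ((R:ℂ) * z - v))^2 := by
    rw [Complex.sq_abs, Complex.sq_abs]; exact h1
  exact lt_of_pow_lt_pow_left₀ 2 (Complex.abs.nonneg _) h2

lemma factor_le {z w : ℂ} (hz : 1 ≤ Complex.abs z) (hw : 1 ≤ Complex.abs w) :
    Complex.abs (z - w) ≤ Complex.abs (1 - (starRingEnd ℂ) z * w) := by
  have key : Complex.normSq (1 - (starRingEnd ℂ) z * w) - Complex.normSq (z - w)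
      = (Complex.normSq z - 1) * (Complex.normSq w - 1) := by
    simp only [Complex.normSq_apply, Complex.sub_re, Complex.sub_im, Complex.mul_re,
      Complex.mul_im, Complex.one_re, Complex.one_im, Complex.conj_re, Complex.conj_im]
    ring
  have hz2 : 1 ≤ Complex.normSq z := by
    rw [← Complex.sq_abs]; nlinarith
  have hw2 : 1 ≤ Complex.normSq w := by
    rw [← Complex.sq_abs]; nlinarith
  have h1 : Complex.normSq (z - w) ≤ Complex.normSq (1 - (starRingEnd ℂ) z * w) := by nlinarith
  have h2 : (Complex.abs (z - w))^2 ≤ (Complex.abs (1 - (starRingEnd ℂ) z * w))^2 := by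
    rw [Complex.sq_abs, Complex.sq_abs]; exact h1
  exact le_of_pow_le_pow_left₀ (by norm_num) (Complex.abs.nonneg _) h2


lemma coeff_X_mul_derivative (Q : Polynomial ℂ) (k : ℕ) :
    (X * derivative Q).coeff k = (k:ℂ) * Q.coeff k := by
  cases k with
  | zero => simp
  | succ k =>
    rw [coeff_X_mul, coeff_derivative]
    push_cast
    ring

lemma coeff_X2_mul_derivative2 (Q : Polynomial ℂ) (k : ℕ) :
    (X^2 * derivative (derivative Q)).coeff k = (k:ℂ) * ((k:ℂ) - 1) * Q.coeff k := by
  match k with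
  | 0 =>
    rw [mul_comm, coeff_mul_X_pow']
    norm_num
  | 1 =>
    rw [mul_comm, coeff_mul_X_pow']
    norm_num
  | (k+2) =>
    rw [mul_comm, coeff_mul_X_pow']
    simp only [show 2 ≤ k + 2 by omega, if_true]
    rw [show k + 2 - 2 = k by omega, coeff_derivative, coeff_derivative]
    push_cast
    ring

lemma Bop_coeff (n : ℕ) (l0 l1 l2 : ℂ) (Q : Polynomial ℂ) (k : ℕ) :
    (Bop n l0 l1 l2 Q).coeff k
      = (l0 + l1 * ((n:ℂ)/2) * (k:ℂ) + l2/2 * ((n:ℂ)/2)^2 * ((k:ℂ) * ((k:ℂ)-1)))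
          * Q.coeff k := by
  simp only [Bop, coeff_add, coeff_C_mul, coeff_X_mul_derivative, coeff_X2_mul_derivative2]
  ring

lemma Bop_sub (n : ℕ) (l0 l1 l2 : ℂ) (Q1 Q2 : Polynomial ℂ) (α : ℂ) :
    Bop n l0 l1 l2 (Q1 - C α * Q2)
      = Bop n l0 l1 l2 Q1 - C α * Bop n l0 l1 l2 Q2 := by
  ext k
  simp only [Bop_coeff, coeff_sub, coeff_C_mul]
  ring

lemma natDegree_Bop_le (n : ℕ) (l0 l1 l2 : ℂ) (Q : Polynomial ℂ) (hQ : Q.natDegree ≤ n) :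
    (Bop n l0 l1 l2 Q).natDegree ≤ n := by
  rw [natDegree_le_iff_coeff_eq_zero]
  intro k hk
  rw [Bop_coeff, coeff_eq_zero_of_natDegree_lt (lt_of_le_of_lt hQ hk), mul_zero]

lemma Bop_coeff_top (n : ℕ) (l0 l1 l2 : ℂ) (Q : Polynomial ℂ) :
    (Bop n l0 l1 l2 Q).coeff n = Lam n l0 l1 l2 * Q.coeff n := by
  rw [Bop_coeff, Lam]
  ring

lemma coeff_dilate (R : ℝ) (Q : Polynomial ℂ) (k : ℕ) :
    (dilate R Q).coeff k = ((R:ℂ))^k * Q.coeff k := by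
  induction Q using Polynomial.induction_on' with
  | add p q hp hq => simp [dilate, add_comp] at hp hq ⊢; rw [hp, hq]; ring
  | monomial i a =>
    rw [dilate, monomial_comp, mul_pow, ← C_pow, ← mul_assoc, ← C_mul, coeff_C_mul,
      coeff_X_pow, coeff_monomial]
    by_cases h : i = k
    · subst h; simp [mul_comm]
    · simp [h, Ne.symm h]

lemma dilate_eval (R : ℝ) (Q : Polynomial ℂ) (z : ℂ) :
    (dilate R Q).eval z = Q.eval ((R:ℂ) * z) := by
  simp [dilate, eval_comp]

lemma dilate_sub (R : ℝ) (P Q : Polynomial ℂ) (δ : ℂ) :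
    dilate R (P - C δ * Q) = dilate R P - C δ * dilate R Q := by
  simp [dilate, sub_comp, mul_comp, C_comp]

lemma natDegree_dilate_le (R : ℝ) (Q : Polynomial ℂ) : (dilate R Q).natDegree ≤ Q.natDegree := by
  rw [natDegree_le_iff_coeff_eq_zero]
  intro k hk
  rw [coeff_dilate, coeff_eq_zero_of_natDegree_lt hk, mul_zero]

lemma coeff_conjRecip (n : ℕ) (Q : Polynomial ℂ) {k : ℕ} (hk : k ≤ n) :
    (conjRecip n Q).coeff k = (starRingEnd ℂ) (Q.coeff (n - k)) := by
  rw [conjRecip, coeff_reflect, revAt_le hk, coeff_map]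

lemma natDegree_conjRecip_le (n : ℕ) (Q : Polynomial ℂ) (hQ : Q.natDegree ≤ n) :
    (conjRecip n Q).natDegree ≤ n := by
  rw [natDegree_le_iff_coeff_eq_zero]
  intro k hk
  rw [conjRecip, coeff_reflect]
  have h1 : revAt n k = k := by
    have : ¬ (k ≤ n) := by omega
    exact revAt_eq_self_of_lt hk
  rw [h1, coeff_map, coeff_eq_zero_of_natDegree_lt (lt_of_le_of_lt hQ hk), map_zero]

lemma conjRecip_sub (n : ℕ) (Q1 Q2 : Polynomial ℂ) (α : ℂ) :
    conjRecip n (Q1 - C α * Q2)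
      = conjRecip n Q1 - C ((starRingEnd ℂ) α) * conjRecip n Q2 := by
  ext k
  simp only [conjRecip, coeff_reflect, coeff_sub, coeff_map, coeff_C_mul, map_sub, map_mul]

lemma eval_conjRecip (n : ℕ) (Q : Polynomial ℂ) (hQ : Q.natDegree ≤ n) {z : ℂ} (hz : z ≠ 0) :
    (conjRecip n Q).eval z = z^n * (starRingEnd ℂ) (Q.eval (((starRingEnd ℂ) z)⁻¹)) := by
  have h1 : (conjRecip n Q).natDegree < n + 1 :=
    Nat.lt_succ_of_le (natDegree_conjRecip_le n Q hQ)
  have h2 : Q.natDegree < n + 1 := Nat.lt_succ_of_le hQ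
  rw [eval_eq_sum_range' h1, eval_eq_sum_range' h2]
  rw [map_sum, Finset.mul_sum]
  rw [← Finset.sum_range_reflect]
  apply Finset.sum_congr rfl
  intro k hk
  rw [Finset.mem_range] at hk
  have hkn : k ≤ n := by omega
  simp only [Nat.add_sub_cancel]
  rw [coeff_conjRecip n Q (by omega : n - k ≤ n), show n - (n - k) = k by omega]
  rw [map_mul, map_pow, map_inv₀, Complex.conj_conj]
  have hzk : z ^ k ≠ 0 := pow_ne_zero k hz
  have hzn : z^n = z^(n-k) * z^k := by rw [← pow_add]; congr 1; omega
  rw [inv_pow, hzn]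
  field_simp


-- helper: membership of average (from avg bound)
lemma avg_mem {c₀ : ℂ} {ρ : ℝ} (hρ : 0 < ρ) (M : Multiset ℂ) (hM0 : M ≠ 0)
    (hM : ∀ t ∈ M, Complex.abs (t - c₀) ≤ ρ) {τ : ℂ}
    (heq : M.sum = (M.card : ℂ) * τ) : Complex.abs (τ - c₀) ≤ ρ := by
  have h := multiset_avg_bound M c₀ id ρ hρ.le hM
  simp only [Multiset.map_id] at h
  rw [heq] at h
  have hm0 : 0 < (M.card : ℝ) := by exact_mod_cast Multiset.card_pos.mpr hM0
  have h2 : (M.card : ℂ) * τ - (M.card : ℂ) * c₀ = (M.card : ℂ) * (τ - c₀) := by ring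
  rw [h2, map_mul, Complex.abs_natCast] at h
  exact le_of_mul_le_mul_left h hm0

/-- Degree-2 Grace–Walsh–Szegő type lemma. -/
lemma GWS2 {n : ℕ} (hn : 1 ≤ n) (A B C' : ℂ) (c₀ : ℂ) {ρ : ℝ} (hρ : 0 < ρ)
    (hq : ∀ t : ℂ, Complex.abs (t - c₀) ≤ ρ →
      A + B * (n:ℂ) * t + C' * ((n:ℂ) * ((n:ℂ) - 1) / 2) * t^2 ≠ 0)
    (M : Multiset ℂ) (hMcard : M.card = n) (hM : ∀ t ∈ M, Complex.abs (t - c₀) ≤ ρ) :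
    A + B * M.sum + (C' / 2) * (M.sum^2 - (M.map (fun t => t^2)).sum) ≠ 0 := by
  intro hE
  have hM0 : M ≠ 0 := by
    intro h0; rw [h0] at hMcard; simp at hMcard; omega
  -- case n = 1
  rcases eq_or_lt_of_le hn with hn1 | hn2
  · obtain ⟨t, rfl⟩ := Multiset.card_eq_one.mp (by omega : M.card = 1)
    have ht := hM t (Multiset.mem_singleton_self t)
    have := hq t ht
    apply this
    have hn1' : (n : ℂ) = 1 := by rw [← hn1]; norm_num
    simp only [Multiset.sum_singleton, Multiset.map_singleton] at hE
    rw [hn1']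
    linear_combination hE
  -- now n ≥ 2
  have hn2' : 2 ≤ n := hn2
  have hnC : (n:ℂ) ≠ 0 := by exact_mod_cast (by omega : n ≠ 0)
  have hn1C : (n:ℂ) - 1 ≠ 0 := by
    intro h
    have : (n:ℂ) = 1 := by linear_combination h
    have : n = 1 := by exact_mod_cast this
    omega
  rcases eq_or_ne C' 0 with rfl | hC'
  · -- C' = 0
    rcases eq_or_ne B 0 with rfl | hB
    · obtain ⟨t, ht⟩ := Multiset.exists_mem_of_ne_zero hM0
      apply hq t (hM t ht)
      simp only [zero_mul, mul_zero, add_zero, zero_div] at hE ⊢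
      simpa using hE
    · -- linear case
      set τ := -A / (B * n) with hτ
      apply hq τ ?_
      · rw [hτ]; field_simp; ring
      · -- τ is the average of M
        apply avg_mem hρ M hM0 hM
        rw [hMcard, hτ]
        have hBn : B * (n:ℂ) ≠ 0 := mul_ne_zero hB hnC
        field_simp
        simp only [zero_mul, mul_zero, add_zero, zero_div] at hE
        linear_combination hE
  · -- C' ≠ 0, n ≥ 2 : quadratic case
    obtain ⟨c2, hc2⟩ : ∃ c2 : ℂ, c2 = C' * ((n:ℂ) * ((n:ℂ) - 1) / 2) := ⟨_, rfl⟩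
    have hc20 : c2 ≠ 0 := by
      rw [hc2]
      exact mul_ne_zero hC' (div_ne_zero (mul_ne_zero hnC hn1C) two_ne_zero)
    have hq' : ∀ t : ℂ, Complex.abs (t - c₀) ≤ ρ → A + B * (n:ℂ) * t + c2 * t^2 ≠ 0 := by
      intro t ht
      rw [hc2]
      exact hq t ht
    obtain ⟨d, hd⟩ := IsAlgClosed.exists_pow_nat_eq ((B*(n:ℂ))^2 - 4*c2*A) (zero_lt_two)
    obtain ⟨τ1, hτ1⟩ : ∃ τ1 : ℂ, τ1 = (-(B*(n:ℂ)) + d) / (2*c2) := ⟨_, rfl⟩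
    obtain ⟨τ2, hτ2⟩ : ∃ τ2 : ℂ, τ2 = (-(B*(n:ℂ)) - d) / (2*c2) := ⟨_, rfl⟩
    have hA : A = c2 * (τ1 * τ2) := by
      rw [hτ1, hτ2, div_mul_div_comm]
      rw [show (-(B*(n:ℂ)) + d) * (-(B*(n:ℂ)) - d) = (B*(n:ℂ))^2 - d^2 by ring, hd]
      field_simp
      ring
    have hBn : B * (n:ℂ) = -(c2 * (τ1 + τ2)) := by
      rw [hτ1, hτ2]
      field_simp
      ring
    have hτ1out : ¬ (Complex.abs (τ1 - c₀) ≤ ρ) := by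
      intro hin
      exact hq' τ1 hin (by linear_combination hA + τ1 * hBn)
    have hτ2out : ¬ (Complex.abs (τ2 - c₀) ≤ ρ) := by
      intro hin
      exact hq' τ2 hin (by linear_combination hA + τ2 * hBn)
    obtain ⟨m, rfl⟩ : ∃ m, n = m + 2 := ⟨n - 2, by omega⟩
    have hcast : ((m + 2 : ℕ) : ℂ) = (m : ℂ) + 2 := by push_cast; ring
    -- the polynomial with zeros M
    obtain ⟨f, hf⟩ : ∃ f : Polynomial ℂ, f = (M.map (fun t => X - C t)).prod := ⟨_, rfl⟩
    have hfmonic : f.Monic := by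
      rw [hf]
      exact monic_multiset_prod_of_monic _ _ (fun t _ => monic_X_sub_C t)
    have hfdeg : f.natDegree = m + 2 := by
      rw [hf, natDegree_multiset_prod_X_sub_C_eq_card, hMcard]
    have hftop : f.coeff (m+2) = 1 := by
      have := hfmonic.coeff_natDegree
      rwa [hfdeg] at this
    have hf1 : f.coeff (m+1) = -M.sum := by
      rw [hf]
      have h1 : m + 1 ≤ Multiset.card M := by rw [hMcard]; omega
      rw [Multiset.prod_X_sub_C_coeff M h1, hMcard]
      rw [show m + 2 - (m+1) = 1 by omega, esymm_one_eq_sum]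
      ring
    have hf2 : f.coeff m = M.esymm 2 := by
      rw [hf]
      have h1 : m ≤ Multiset.card M := by rw [hMcard]; omega
      rw [Multiset.prod_X_sub_C_coeff M h1, hMcard]
      rw [show m + 2 - m = 2 by omega]
      ring
    have hfhi : ∀ k, m + 2 < k → f.coeff k = 0 := by
      intro k hk
      apply coeff_eq_zero_of_natDegree_lt
      rw [hfdeg]; omega
    -- derivative coefficients
    have hd1 : (derivative f).coeff (m+1) = ((m:ℂ)+2) := by
      rw [coeff_derivative, hftop]; push_cast; ring
    have hd0 : (derivative f).coeff m = -((m:ℂ)+1) * M.sum := by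
      rw [coeff_derivative, hf1]; push_cast; ring
    have hd2 : (derivative f).coeff (m+2) = 0 := by
      rw [coeff_derivative, hfhi (m+3) (by omega)]; ring
    -- the polar derivative g
    obtain ⟨g, hg⟩ : ∃ g : Polynomial ℂ,
        g = C ((m:ℂ)+2) * f + (C τ1 - X) * derivative f := ⟨_, rfl⟩
    have hgcoeff : ∀ k, g.coeff (k+1) =
        ((m:ℂ)+2) * f.coeff (k+1) + τ1 * (derivative f).coeff (k+1)
          - (derivative f).coeff k := by
      intro k
      rw [hg]
      simp only [coeff_add, coeff_C_mul, sub_mul, coeff_sub, coeff_X_mul]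
      ring
    obtain ⟨γ, hγ⟩ : ∃ γ : ℂ, γ = ((m:ℂ)+2) * τ1 - M.sum := ⟨_, rfl⟩
    have hγ0 : γ ≠ 0 := by
      rw [hγ]
      intro h0
      apply hτ1out
      apply avg_mem hρ M hM0 hM
      rw [hMcard, hcast]
      linear_combination -h0
    have hgtop : g.coeff (m+2) = 0 := by
      rw [show m+2 = (m+1)+1 by rfl, hgcoeff (m+1), hftop, hd1, hd2]
      ring
    have hg1 : g.coeff (m+1) = γ := by
      rw [show m+1 = m+1 by rfl, hgcoeff m, hf1, hd1, hd0, hγ]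
      ring
    have hXfm : (X * derivative f).coeff m = (m:ℂ) * M.esymm 2 := by
      cases m with
      | zero => simp
      | succ k =>
        rw [coeff_X_mul, coeff_derivative]
        have : f.coeff (k+1) = M.esymm 2 := hf2
        rw [this]
        push_cast
        ring
    have hgm : g.coeff m = 2 * M.esymm 2 - ((m:ℂ)+1) * τ1 * M.sum := by
      rw [hg]
      simp only [coeff_add, coeff_C_mul, sub_mul, coeff_sub]
      rw [hXfm, hf2, hd0]
      ring
    -- degree of g
    have hgle : g.natDegree ≤ m + 2 := by
      rw [hg]
      apply le_trans (natDegree_add_le _ _)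
      apply max_le
      · exact le_trans (natDegree_C_mul_le _ _) (le_of_eq hfdeg)
      · apply le_trans (natDegree_mul_le)
        have h1 : (C τ1 - X).natDegree ≤ 1 := by
          apply le_trans (natDegree_sub_le _ _)
          simp
        have h2 : (derivative f).natDegree ≤ m + 1 := by
          have h3 := natDegree_derivative_le f
          rw [hfdeg] at h3
          omega
        omega
    have hgdeg : g.natDegree = m + 1 := by
      apply le_antisymm
      · rw [natDegree_le_iff_coeff_eq_zero]
        intro k hk
        rcases eq_or_lt_of_le (by omega : m + 2 ≤ k) with rfl | hk2
        · exact hgtop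
        · exact coeff_eq_zero_of_natDegree_lt (by omega)
      · exact le_natDegree_of_ne_zero (by rw [hg1]; exact hγ0)
    have hg0 : g ≠ 0 := by
      intro h0
      apply hγ0
      rw [← hg1, h0, coeff_zero]
    have hglead : g.leadingCoeff = γ := by
      rw [leadingCoeff, hgdeg, hg1]
    have hNcard : g.roots.card = m + 1 := by rw [roots_card, hgdeg]
    -- Laguerre: all roots of g lie in the disk
    have hNmem : ∀ s ∈ g.roots, Complex.abs (s - c₀) ≤ ρ := by
      intro s hs
      by_contra hout
      push_neg at hout
      have hst : ∀ t ∈ M, s ≠ t := by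
        intro t ht h0
        rw [h0] at hout
        exact absurd (hM t ht) (not_le.mpr hout)
      have hfs : eval s f ≠ 0 := by rw [hf]; exact eval_prod_lin_ne_zero hst
      have hgs : eval s g = 0 := by
        have h9 := (Polynomial.mem_roots hg0).mp hs
        exact h9
      rw [hg, eval_add, eval_mul, eval_mul, eval_C, eval_sub, eval_C, eval_X] at hgs
      rw [hf, eval_derivative_prod_lin M s hst, ← hf] at hgs
      have hkey : ((m:ℂ)+2) + (τ1 - s) * (M.map (fun t => (s - t)⁻¹)).sum = 0 := by
        have h2 : eval s f * (((m:ℂ)+2) + (τ1 - s) * (M.map (fun t => (s - t)⁻¹)).sum) = 0 := by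
          linear_combination hgs
        rcases mul_eq_zero.mp h2 with h3 | h3
        · exact absurd h3 hfs
        · exact h3
      have hsτ1 : s ≠ τ1 := by
        intro h0
        rw [h0] at hkey
        simp at hkey
        have : (m:ℂ) + 2 = 0 := by linear_combination hkey
        have h4 : ((m:ℂ)+2) ≠ 0 := by
          have h6 : ((m+2 : ℕ) : ℂ) ≠ 0 := Nat.cast_ne_zero.mpr (by omega)
          rwa [hcast] at h6
        exact h4 this
      have hsub : s - τ1 ≠ 0 := sub_ne_zero.mpr hsτ1
      have heq2 : (M.map (fun t => (s - t)⁻¹)).sum = (M.card : ℂ) * (s - τ1)⁻¹ := by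
        rw [hMcard, hcast,
          show ((m:ℂ)+2) * (s - τ1)⁻¹ = ((m:ℂ)+2) / (s - τ1) from (div_eq_mul_inv _ _).symm,
          eq_div_iff hsub]
        linear_combination -hkey
      exact hτ1out (avg_inv_mem hρ hout M hM hM0 heq2)
    -- sum of roots of g desides the (m)-th coefficient
    have hgfact : g = C γ * (g.roots.map (fun w => X - C w)).prod := by
      rw [← hglead]
      exact (C_leadingCoeff_mul_prod_multiset_X_sub_C (by rw [roots_card])).symm
    have hgm2 : g.coeff m = γ * (- g.roots.sum) := by
      conv_lhs => rw [hgfact]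
      rw [coeff_C_mul]
      have h1 : m ≤ Multiset.card g.roots := by rw [hNcard]; omega
      rw [Multiset.prod_X_sub_C_coeff _ h1, hNcard]
      rw [show m + 1 - m = 1 by omega, esymm_one_eq_sum]
      ring
    have hE1out : ((m:ℂ)+1) * τ2 - g.roots.sum ≠ 0 := by
      intro h0
      apply hτ2out
      apply avg_mem hρ g.roots ?_ hNmem (τ := τ2)
      · rw [hNcard]
        push_cast
        linear_combination -h0
      · intro hr0
        rw [hr0] at hNcard
        simp at hNcard
    -- final contradiction
    have hcomb : 2 * M.esymm 2 - ((m:ℂ)+1) * τ1 * M.sum = γ * (- g.roots.sum) := by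
      rw [← hgm, hgm2]
    have h2e2 := two_esymm_two M
    have hkey : c2 * (γ * (((m:ℂ)+1) * τ2 - g.roots.sum)) = 0 := by
      rw [hcast] at hBn hc2
      linear_combination (((m:ℂ)+2)*((m:ℂ)+1)) * hE - c2 * hcomb
        + (c2*((m:ℂ)+1)*τ2) * hγ - (((m:ℂ)+2)*((m:ℂ)+1)) * hA
        - (((m:ℂ)+1)*M.sum) * hBn + (2*M.esymm 2) * hc2
        + (((m:ℂ)+2)*((m:ℂ)+1)*C'/2) * h2e2
    exact absurd hkey (mul_ne_zero hc20 (mul_ne_zero hγ0 hE1out))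


lemma Bop_eval (n : ℕ) (l0 l1 l2 : ℂ) (Q : Polynomial ℂ) (z : ℂ) :
    (Bop n l0 l1 l2 Q).eval z
      = l0 * Q.eval z + (l1 * ((n:ℂ)/2)) * (z * (derivative Q).eval z)
        + (l2/2 * ((n:ℂ)/2)^2) * (z^2 * (derivative (derivative Q)).eval z) := by
  simp [Bop]

-- the disk D(c,r) with s|t-1| ≤ |t| characterization
lemma D_identity (s : ℝ) (hs : 1 < s) (t : ℂ) :
    s^2 * Complex.normSq (t - 1) - Complex.normSq t
      = (s^2 - 1) * (Complex.normSq (t - ((s^2/(s^2-1) : ℝ) : ℂ)) - (s/(s^2-1))^2) := by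
  have h1 : s^2 - 1 ≠ 0 := by nlinarith
  simp only [Complex.normSq_apply, Complex.sub_re, Complex.sub_im, Complex.one_re,
    Complex.one_im, Complex.ofReal_re, Complex.ofReal_im]
  field_simp
  ring

lemma mem_D_iff {s : ℝ} (hs : 1 < s) (t : ℂ) :
    Complex.abs (t - ((s^2/(s^2-1) : ℝ) : ℂ)) ≤ s/(s^2-1)
      ↔ s * Complex.abs (t - 1) ≤ Complex.abs t := by
  have hs1 : (0:ℝ) < s^2 - 1 := by nlinarith
  have hr : (0:ℝ) < s/(s^2-1) := by positivity
  have key := D_identity s hs t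
  constructor
  · intro h
    have h2 : Complex.normSq (t - ((s^2/(s^2-1) : ℝ) : ℂ)) ≤ (s/(s^2-1))^2 := by
      rw [← Complex.sq_abs]
      exact pow_le_pow_left₀ (Complex.abs.nonneg _) h 2
    have h3 : s^2 * Complex.normSq (t-1) ≤ Complex.normSq t := by nlinarith
    have h4 : (s * Complex.abs (t-1))^2 ≤ (Complex.abs t)^2 := by
      rw [mul_pow, Complex.sq_abs, Complex.sq_abs]; nlinarith
    exact le_of_pow_le_pow_left₀ (by norm_num) (Complex.abs.nonneg _) h4
  · intro h
    have h4 : (s * Complex.abs (t-1))^2 ≤ (Complex.abs t)^2 :=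
      pow_le_pow_left₀ (by positivity) h 2
    rw [mul_pow, Complex.sq_abs, Complex.sq_abs] at h4
    have h2 : Complex.normSq (t - ((s^2/(s^2-1) : ℝ) : ℂ)) - (s/(s^2-1))^2 ≤ 0 := by nlinarith
    have h5 : (Complex.abs (t - ((s^2/(s^2-1) : ℝ) : ℂ)))^2 ≤ (s/(s^2-1))^2 := by
      rw [Complex.sq_abs]; linarith
    exact le_of_pow_le_pow_left₀ (by norm_num) hr.le h5

/-- Key lemma: Bop of a polynomial of degree n with all roots in the closed
disk of radius ρ does not vanish outside that disk. -/
lemma KL {n : ℕ} (hn : 1 ≤ n) {l0 l1 l2 : ℂ} (hB : AdmissibleParams n l0 l1 l2)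
    {Q : Polynomial ℂ} (hQdeg : Q.natDegree = n) {ρ : ℝ} (hρ : 0 < ρ)
    (hroots : ∀ w ∈ Q.roots, Complex.abs w ≤ ρ) {z : ℂ} (hz : ρ < Complex.abs z) :
    (Bop n l0 l1 l2 Q).eval z ≠ 0 := by
  have hQ0 : Q ≠ 0 := by
    intro h0
    rw [h0, natDegree_zero] at hQdeg
    omega
  have hzw : ∀ w ∈ Q.roots, z ≠ w := by
    intro w hw h0
    rw [h0] at hz
    exact absurd (hroots w hw) (not_le.mpr hz)
  set M := Q.roots with hM
  have hMcard : M.card = n := by rw [hM, roots_card, hQdeg]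
  set a := Q.leadingCoeff with ha
  have ha0 : a ≠ 0 := leadingCoeff_ne_zero.mpr hQ0
  have hz0 : z ≠ 0 := by
    intro h0
    rw [h0] at hz
    simp at hz
    linarith
  set s : ℝ := Complex.abs z / ρ with hsdef
  have hs : 1 < s := (one_lt_div hρ).mpr hz
  -- the big disk
  set cD : ℂ := ((s^2/(s^2-1) : ℝ) : ℂ) with hcD
  set rD : ℝ := s/(s^2-1) with hrD
  have hrD0 : 0 < rD := by
    rw [hrD]
    have : (0:ℝ) < s^2 - 1 := by nlinarith
    positivity
  -- the points t_k
  set T := M.map (fun w => z * (z - w)⁻¹) with hT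
  have hTcard : T.card = n := by rw [hT, Multiset.card_map, hMcard]
  have hTmem : ∀ t ∈ T, Complex.abs (t - cD) ≤ rD := by
    intro t ht
    rw [hT, Multiset.mem_map] at ht
    obtain ⟨w, hw, rfl⟩ := ht
    rw [hcD, hrD, mem_D_iff hs]
    have hzwne : z - w ≠ 0 := sub_ne_zero.mpr (hzw w hw)
    have h1 : z * (z - w)⁻¹ - 1 = w * (z - w)⁻¹ := by field_simp; ring
    rw [h1, map_mul, map_mul, map_inv₀]
    rw [hsdef]
    have h2 : 0 < Complex.abs (z - w) := Complex.abs.pos hzwne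
    have h3 := hroots w hw
    have hinv : (0:ℝ) ≤ (Complex.abs (z-w))⁻¹ := by positivity
    have hzpos : (0:ℝ) ≤ Complex.abs z := Complex.abs.nonneg z
    rw [div_mul_eq_mul_div, div_le_iff₀ hρ]
    nlinarith [mul_le_mul_of_nonneg_left h3 (mul_nonneg hzpos hinv)]
  -- the admissibility transfer
  have hq : ∀ t : ℂ, Complex.abs (t - cD) ≤ rD →
      l0 + (l1 * ((n:ℂ)/2)) * (n:ℂ) * t + (l2 * ((n:ℂ)/2)^2) * ((n:ℂ) * ((n:ℂ) - 1) / 2) * t^2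
        ≠ 0 := by
    intro t ht heq0
    have hU : Complex.abs _ ≤ Complex.abs _ := hB ((n:ℂ) * t / 2) (by linear_combination heq0)
    have hnR : (0:ℝ) < (n:ℝ) := by exact_mod_cast hn
    have h1 : Complex.abs ((n:ℂ) * t / 2) = (n:ℝ)/2 * Complex.abs t := by
      rw [map_div₀, map_mul]
      simp [Complex.abs_natCast]
      ring
    have h2 : (n:ℂ) * t / 2 - (n:ℂ)/2 = (n:ℂ)/2 * (t - 1) := by ring
    have h3 : Complex.abs ((n:ℂ)/2 * (t-1)) = (n:ℝ)/2 * Complex.abs (t-1) := by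
      rw [map_mul, map_div₀]
      simp [Complex.abs_natCast]
    rw [h1, h2, h3] at hU
    have h4 : Complex.abs t ≤ Complex.abs (t - 1) := by
      have := mul_le_mul_of_nonneg_left hU (by positivity : (0:ℝ) ≤ 2/(n:ℝ))
      calc Complex.abs t = 2/(n:ℝ) * ((n:ℝ)/2 * Complex.abs t) := by field_simp
        _ ≤ 2/(n:ℝ) * ((n:ℝ)/2 * Complex.abs (t-1)) := this
        _ = Complex.abs (t-1) := by field_simp
    have h5 : s * Complex.abs (t - 1) ≤ Complex.abs t := by
      rw [hcD, hrD, mem_D_iff hs] at ht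
      exact ht
    have h6 : Complex.abs (t-1) = 0 := by nlinarith [Complex.abs.nonneg (t-1), Complex.abs.nonneg t]
    have h7 : t = 1 := by
      have := Complex.abs.eq_zero.mp h6
      linear_combination this
    rw [h7] at h4 h6
    rw [h6] at h4
    norm_num at h4
  -- apply GWS2
  have hmain := GWS2 hn l0 (l1 * ((n:ℂ)/2)) (l2 * ((n:ℂ)/2)^2) cD hrD0 hq T hTcard hTmem
  -- rewrite the Bop evaluation
  set F := eval z ((M.map (fun t => X - C t)).prod) with hF
  have hF0 : F ≠ 0 := eval_prod_lin_ne_zero hzw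
  have hQeval : Q.eval z = a * F := by
    conv_lhs => rw [factorization Q]
    rw [eval_mul, eval_C]
  have hQ' : derivative Q = C a * derivative ((M.map (fun t => X - C t)).prod) := by
    conv_lhs => rw [factorization Q]
    rw [derivative_mul, derivative_C]
    simp
    exact rfl
  have hQ'eval : (derivative Q).eval z = a * (F * (M.map (fun t => (z - t)⁻¹)).sum) := by
    rw [hQ', eval_mul, eval_C, eval_derivative_prod_lin M z hzw]
  have hQ''eval : (derivative (derivative Q)).eval z
      = a * (F * (((M.map (fun t => (z - t)⁻¹)).sum)^2 - (M.map (fun t => ((z - t)⁻¹)^2)).sum)) := by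
    rw [hQ', derivative_mul, derivative_C]
    simp only [zero_mul, zero_add]
    rw [eval_mul, eval_C, eval_derivative2_prod_lin M z hzw]
  -- sums over T
  have hT1 : T.sum = z * (M.map (fun t => (z - t)⁻¹)).sum := by
    rw [hT, ← Multiset.sum_map_mul_left]
  have hT2 : (T.map (fun t => t^2)).sum = z^2 * (M.map (fun t => ((z - t)⁻¹)^2)).sum := by
    rw [hT, Multiset.map_map, ← Multiset.sum_map_mul_left]
    apply congrArg
    apply Multiset.map_congr rfl
    intro t _
    simp [mul_pow]
  have hfinal : (Bop n l0 l1 l2 Q).eval z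
      = (a * F) * (l0 + (l1 * ((n:ℂ)/2)) * T.sum
          + ((l2 * ((n:ℂ)/2)^2) / 2) * (T.sum^2 - (T.map (fun t => t^2)).sum)) := by
    rw [Bop_eval, hQeval, hQ'eval, hQ''eval, hT1, hT2]
    ring
  rw [hfinal]
  exact mul_ne_zero (mul_ne_zero ha0 hF0) hmain


lemma max_mod {A D : Polynomial ℂ} (hD : ∀ ζ : ℂ, Complex.abs ζ ≤ 1 → D.eval ζ ≠ 0)
    (hcirc : ∀ ζ : ℂ, Complex.abs ζ = 1 → Complex.abs (A.eval ζ) ≤ Complex.abs (D.eval ζ))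
    (h0 : Complex.abs (A.eval 0) < Complex.abs (D.eval 0))
    {z : ℂ} (hz : Complex.abs z < 1) : Complex.abs (A.eval z) < Complex.abs (D.eval z) := by
  set f : ℂ → ℂ := fun ζ => A.eval ζ / D.eval ζ with hf
  have hDball : ∀ ζ ∈ Metric.closedBall (0:ℂ) 1, D.eval ζ ≠ 0 := by
    intro ζ hζ
    rw [Metric.mem_closedBall, dist_zero_right] at hζ
    exact hD ζ (by rwa [Complex.norm_eq_abs] at hζ)
  have hdiff : DifferentiableOn ℂ f (Metric.ball (0:ℂ) 1) := by
    apply DifferentiableOn.div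
    · exact (A.differentiable).differentiableOn
    · exact (D.differentiable).differentiableOn
    · intro ζ hζ
      exact hDball ζ (Metric.ball_subset_closedBall hζ)
  have hcont : ContinuousOn f (Metric.closedBall (0:ℂ) 1) := by
    apply ContinuousOn.div
    · exact (A.continuous).continuousOn
    · exact (D.continuous).continuousOn
    · exact hDball
  have hdc : DiffContOnCl ℂ f (Metric.ball (0:ℂ) 1) :=
    ⟨hdiff, by rwa [closure_ball (0:ℂ) one_ne_zero]⟩
  have hbound : ∀ ζ ∈ frontier (Metric.ball (0:ℂ) 1), ‖f ζ‖ ≤ 1 := by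
    intro ζ hζ
    rw [frontier_ball (0:ℂ) one_ne_zero, mem_sphere_iff_norm, sub_zero] at hζ
    have hζ' : Complex.abs ζ = 1 := by rwa [Complex.norm_eq_abs] at hζ
    have hDζ : D.eval ζ ≠ 0 := hD ζ (le_of_eq hζ')
    rw [hf]
    simp only [norm_div, Complex.norm_eq_abs]
    rw [div_le_one (Complex.abs.pos hDζ)]
    exact hcirc ζ hζ'
  have hle : ∀ ζ ∈ Metric.closedBall (0:ℂ) 1, ‖f ζ‖ ≤ 1 := by
    intro ζ hζ
    apply Complex.norm_le_of_forall_mem_frontier_norm_le Metric.isBounded_ball hdc hbound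
    rwa [closure_ball (0:ℂ) one_ne_zero]
  have hzball : z ∈ Metric.ball (0:ℂ) 1 := by
    rw [Metric.mem_ball, dist_zero_right, Complex.norm_eq_abs]
    exact hz
  have hDz : D.eval z ≠ 0 := hD z hz.le
  rcases lt_or_eq_of_le (hle z (Metric.ball_subset_closedBall hzball)) with hlt | heq
  · rw [hf] at hlt
    simp only [norm_div, Complex.norm_eq_abs] at hlt
    rwa [div_lt_one (Complex.abs.pos hDz)] at hlt
  · exfalso
    have hmax : IsMaxOn (norm ∘ f) (Metric.ball (0:ℂ) 1) z := by
      intro w hw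
      simp only [Function.comp_apply, Set.mem_setOf_eq]
      rw [heq]
      exact hle w (Metric.ball_subset_closedBall hw)
    have heqon := Complex.eqOn_of_isPreconnected_of_isMaxOn_norm
      (convex_ball (0:ℂ) 1).isPreconnected Metric.isOpen_ball hdiff hzball hmax
    have h00 : (0:ℂ) ∈ Metric.ball (0:ℂ) 1 := by
      rw [Metric.mem_ball, dist_zero_right]
      norm_num
    have hf0 : f 0 = f z := heqon h00
    have h1 : ‖f 0‖ = 1 := by rw [hf0, heq]
    rw [hf] at h1
    simp only [norm_div, Complex.norm_eq_abs] at h1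
    have hD0 : D.eval 0 ≠ 0 := hD 0 (by norm_num)
    rw [div_eq_one_iff_eq (by simpa using (Complex.abs.pos hD0).ne')] at h1
    rw [h1] at h0
    exact lt_irrefl _ h0


lemma exists_rho (S : Multiset ℝ) (h : ∀ x ∈ S, x < 1) :
    ∃ ρ : ℝ, 0 < ρ ∧ ρ < 1 ∧ ∀ x ∈ S, x ≤ ρ := by
  induction S using Multiset.induction_on with
  | empty => exact ⟨1/2, by norm_num, by norm_num, by simp⟩
  | cons a S ih =>
    obtain ⟨ρ, h1, h2, h3⟩ := ih (fun x hx => h x (Multiset.mem_cons_of_mem hx))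
    refine ⟨max ρ (max a (1/2)), ?_, ?_, ?_⟩
    · exact lt_of_lt_of_le h1 (le_max_left _ _)
    · have ha := h a (Multiset.mem_cons_self a S)
      rw [max_lt_iff, max_lt_iff]
      exact ⟨h2, ha, by norm_num⟩
    · intro x hx
      rcases Multiset.mem_cons.mp hx with rfl | hx
      · exact le_trans (le_max_left _ _) (le_max_right _ _)
      · exact le_trans (h3 x hx) (le_max_left _ _)

lemma Bop_Y_ne_zero {n : ℕ} (hn : 1 ≤ n) {l0 l1 l2 : ℂ} (hB : AdmissibleParams n l0 l1 l2)
    {Q : Polynomial ℂ} (hQdeg : Q.natDegree = n)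
    (hQout : ∀ x : ℂ, 1 < Complex.abs x → Q.eval x ≠ 0)
    {α : ℂ} (hα : Complex.abs α ≤ 1) {R : ℝ} (hR : 1 < R)
    {w : ℂ} (hw : 1 ≤ Complex.abs w) :
    (Bop n l0 l1 l2 (dilate R Q - C α * Q)).eval w ≠ 0 := by
  obtain ⟨Y, hY⟩ : ∃ Y, Y = dilate R Q - C α * Q := ⟨_, rfl⟩
  rw [← hY]
  have hQ0 : Q ≠ 0 := by
    intro h
    rw [h, natDegree_zero] at hQdeg
    omega
  have hQroots : ∀ v ∈ Q.roots, Complex.abs v ≤ 1 := by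
    intro v hv
    by_contra hgt
    push_neg at hgt
    exact hQout v hgt ((Polynomial.mem_roots hQ0).mp hv)
  have hrc : Q.roots.card = n := by rw [roots_card, hQdeg]
  have hlc : Q.leadingCoeff ≠ 0 := leadingCoeff_ne_zero.mpr hQ0
  have hYeval : ∀ v : ℂ, 1 ≤ Complex.abs v → Y.eval v ≠ 0 := by
    intro v hv
    have hlt : Complex.abs (Q.eval v) < Complex.abs (Q.eval ((R:ℂ) * v)) := by
      rw [abs_eval, abs_eval]
      apply mul_lt_mul_of_pos_left ?_ (Complex.abs.pos hlc)
      apply prod_map_lt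
      · intro h0
        rw [h0] at hrc
        simp at hrc
        omega
      · intro t ht
        exact ⟨Complex.abs.nonneg _, factor_lt hR (hQroots t ht) hv⟩
    intro h0
    rw [hY, eval_sub, eval_mul, eval_C, dilate_eval, sub_eq_zero] at h0
    have habs : Complex.abs (Q.eval ((R:ℂ) * v)) ≤ Complex.abs (Q.eval v) := by
      rw [h0, map_mul]
      nlinarith [Complex.abs.nonneg (Q.eval v)]
    linarith
  have hQtop : Q.coeff n ≠ 0 := by
    rw [← hQdeg]
    exact leadingCoeff_ne_zero.mpr hQ0
  have hRn : (1:ℝ) < R^n := one_lt_pow₀ hR (by omega)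
  have hRa : (R:ℂ)^n - α ≠ 0 := by
    intro h
    have h2 : α = (R:ℂ)^n := by linear_combination -h
    rw [h2] at hα
    rw [← Complex.ofReal_pow, Complex.abs_ofReal, abs_of_pos (by linarith)] at hα
    linarith
  have hYtop : Y.coeff n ≠ 0 := by
    rw [hY, coeff_sub, coeff_dilate, coeff_C_mul]
    have : ((R:ℂ))^n * Q.coeff n - α * Q.coeff n = ((R:ℂ)^n - α) * Q.coeff n := by ring
    rw [this]
    exact mul_ne_zero hRa hQtop
  have hYdeg : Y.natDegree = n := by
    apply le_antisymm
    · rw [hY]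
      apply le_trans (natDegree_sub_le _ _)
      apply max_le
      · exact le_trans (natDegree_dilate_le R Q) hQdeg.le
      · exact le_trans (natDegree_C_mul_le _ _) hQdeg.le
    · exact le_natDegree_of_ne_zero hYtop
  have hY0 : Y ≠ 0 := fun h => hYtop (by rw [h, coeff_zero])
  have hYroots : ∀ v ∈ Y.roots, Complex.abs v < 1 := by
    intro v hv
    by_contra hge
    push_neg at hge
    exact hYeval v hge ((Polynomial.mem_roots hY0).mp hv)
  obtain ⟨ρ, hρ0, hρ1, hρb⟩ := exists_rho (Y.roots.map Complex.abs) (by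
    intro x hx
    rw [Multiset.mem_map] at hx
    obtain ⟨v, hv, rfl⟩ := hx
    exact hYroots v hv)
  exact KL hn hB hYdeg hρ0
    (fun v hv => hρb _ (Multiset.mem_map_of_mem _ hv)) (lt_of_lt_of_le hρ1 hw)

end BnAux

/-- strict inequality inside the unit disk. -/
theorem Bn_strict_inequality_in_disk
    (n : ℕ) (hn : 1 ≤ n) (l0 l1 l2 : ℂ) (hB : AdmissibleParams n l0 l1 l2)
    (P : Polynomial ℂ) (hdeg : P.degree ≤ n)
    (hP : ∀ z : ℂ, ‖z‖ < 1 → P.eval z ≠ 0)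
    (α : ℂ) (hα : ‖α‖ ≤ 1) (R : ℝ) (hR : 1 < R)
    (z : ℂ) (hz : ‖z‖ < 1) :
    ‖(Bop n l0 l1 l2 (dilate R P)).eval z
        - α * (Bop n l0 l1 l2 P).eval z‖
      < ‖(conjRecip n (Bop n l0 l1 l2 (dilate R (conjRecip n P)))).eval z
          - (starRingEnd ℂ) α * (conjRecip n (Bop n l0 l1 l2 (conjRecip n P))).eval z‖ := by
  classical
  simp only [Complex.norm_eq_abs] at hP hα hz ⊢
  have hPdeg : P.natDegree ≤ n := natDegree_le_iff_degree_le.mpr hdeg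
  have hp0 : P.coeff 0 ≠ 0 := by
    rw [coeff_zero_eq_eval_zero]
    exact hP 0 (by simp)
  have hP0 : P ≠ 0 := fun h => hp0 (by rw [h, coeff_zero])
  have hProots : ∀ v ∈ P.roots, 1 ≤ Complex.abs v := by
    intro v hv
    by_contra hlt
    push_neg at hlt
    exact hP v hlt ((Polynomial.mem_roots hP0).mp hv)
  have hconj0 : ∀ x : ℂ, (starRingEnd ℂ) x ≠ 0 ↔ x ≠ 0 := by
    intro x
    constructor
    · intro h h2; exact h (by rw [h2, map_zero])
    · intro h h2
      apply h
      have := congrArg (starRingEnd ℂ) h2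
      simpa using this
  -- the conjugate-reciprocal of P
  obtain ⟨Ps, hPs⟩ : ∃ Ps, Ps = conjRecip n P := ⟨_, rfl⟩
  have hPsdegle : Ps.natDegree ≤ n := by
    rw [hPs]; exact BnAux.natDegree_conjRecip_le n P hPdeg
  have hPstop : Ps.coeff n = (starRingEnd ℂ) (P.coeff 0) := by
    rw [hPs, BnAux.coeff_conjRecip n P (le_refl n), Nat.sub_self]
  have hPstop0 : Ps.coeff n ≠ 0 := by
    rw [hPstop]; exact (hconj0 _).mpr hp0
  have hPsdeg : Ps.natDegree = n := le_antisymm hPsdegle (le_natDegree_of_ne_zero hPstop0)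
  have hPs0 : Ps ≠ 0 := fun h => hPstop0 (by rw [h, coeff_zero])
  have hPsout : ∀ x : ℂ, 1 < Complex.abs x → Ps.eval x ≠ 0 := by
    intro x hx
    have hx0 : x ≠ 0 := by
      intro h; rw [h] at hx; simp at hx; linarith
    rw [hPs, BnAux.eval_conjRecip n P hPdeg hx0]
    apply mul_ne_zero (pow_ne_zero n hx0)
    rw [hconj0]
    apply hP
    rw [map_inv₀, Complex.abs_conj]
    exact inv_lt_one_of_one_lt₀ hx
  -- |P| ≤ |P*| outside the unit disk
  have habs_lc : Complex.abs P.leadingCoeff ≤ Complex.abs (P.coeff 0) := by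
    have h1 := BnAux.abs_eval P 0
    rw [coeff_zero_eq_eval_zero, h1]
    have h2 : 1 ≤ (P.roots.map (fun v => Complex.abs (0 - v))).prod := by
      apply BnAux.one_le_prod_map
      intro v hv
      rw [zero_sub, map_neg_eq_map]
      exact hProots v hv
    nlinarith [Complex.abs.nonneg P.leadingCoeff]
  have habs_cn : Complex.abs (P.coeff n) ≤ Complex.abs (P.coeff 0) := by
    rcases lt_or_eq_of_le hPdeg with h | h
    · rw [coeff_eq_zero_of_natDegree_lt h, map_zero]
      exact Complex.abs.nonneg _
    · rw [show P.coeff n = P.leadingCoeff by rw [leadingCoeff, h]]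
      exact habs_lc
  have hPle : ∀ x : ℂ, 1 ≤ Complex.abs x → Complex.abs (P.eval x) ≤ Complex.abs (Ps.eval x) := by
    intro x hx
    have hx0 : x ≠ 0 := by
      intro h; rw [h] at hx; simp at hx; linarith
    have hax : (0:ℝ) < Complex.abs x := Complex.abs.pos hx0
    have hcx0 : (starRingEnd ℂ) x ≠ 0 := (hconj0 x).mpr hx0
    rw [hPs, BnAux.eval_conjRecip n P hPdeg hx0, map_mul, map_pow, Complex.abs_conj]
    rw [BnAux.abs_eval P x, BnAux.abs_eval P (((starRingEnd ℂ) x)⁻¹)]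
    have step1 : ((P.roots.map (fun v => Complex.abs (x - v))).prod)
        ≤ ((P.roots.map (fun v => Complex.abs x * Complex.abs ((((starRingEnd ℂ) x)⁻¹) - v))).prod) := by
      apply BnAux.prod_map_le
      intro v hv
      refine ⟨Complex.abs.nonneg _, ?_⟩
      have hfac : Complex.abs x * Complex.abs ((((starRingEnd ℂ) x)⁻¹) - v)
          = Complex.abs (1 - (starRingEnd ℂ) x * v) := by
        have hsplit : x * ((((starRingEnd ℂ) x)⁻¹) - v)
            = (x * ((starRingEnd ℂ) x)⁻¹) * (1 - (starRingEnd ℂ) x * v) := by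
          field_simp
        rw [← map_mul, hsplit, map_mul, map_mul, map_inv₀, Complex.abs_conj]
        rw [mul_inv_cancel₀ hax.ne']
        ring
      rw [hfac]
      exact BnAux.factor_le hx (hProots v hv)
    have step2 : ((P.roots.map (fun v => Complex.abs x * Complex.abs ((((starRingEnd ℂ) x)⁻¹) - v))).prod)
        = (Complex.abs x)^(P.natDegree) *
            ((P.roots.map (fun v => Complex.abs ((((starRingEnd ℂ) x)⁻¹) - v))).prod) := by
      rw [Multiset.prod_map_mul]
      congr 1
      rw [Multiset.map_const', Multiset.prod_replicate, BnAux.roots_card]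
    have step3 : (Complex.abs x)^(P.natDegree) ≤ (Complex.abs x)^n :=
      pow_le_pow_right₀ hx hPdeg
    have hprodnn : (0:ℝ) ≤ ((P.roots.map (fun v => Complex.abs ((((starRingEnd ℂ) x)⁻¹) - v))).prod) :=
      BnAux.prod_map_nonneg _ _ (fun v _ => Complex.abs.nonneg _)
    calc Complex.abs P.leadingCoeff * ((P.roots.map (fun v => Complex.abs (x - v))).prod)
        ≤ Complex.abs P.leadingCoeff *
            ((P.roots.map (fun v => Complex.abs x * Complex.abs ((((starRingEnd ℂ) x)⁻¹) - v))).prod) :=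
          mul_le_mul_of_nonneg_left step1 (Complex.abs.nonneg _)
      _ = Complex.abs P.leadingCoeff * ((Complex.abs x)^(P.natDegree) *
            ((P.roots.map (fun v => Complex.abs ((((starRingEnd ℂ) x)⁻¹) - v))).prod)) := by
          rw [step2]
      _ ≤ Complex.abs P.leadingCoeff * ((Complex.abs x)^n *
            ((P.roots.map (fun v => Complex.abs ((((starRingEnd ℂ) x)⁻¹) - v))).prod)) := by
          apply mul_le_mul_of_nonneg_left ?_ (Complex.abs.nonneg _)
          exact mul_le_mul_of_nonneg_right step3 hprodnn
      _ = Complex.abs x ^ n * (Complex.abs P.leadingCoeff *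
            ((P.roots.map (fun v => Complex.abs ((((starRingEnd ℂ) x)⁻¹) - v))).prod)) := by ring
  -- main objects
  obtain ⟨H, hH⟩ : ∃ H, H = dilate R Ps - C α * Ps := ⟨_, rfl⟩
  obtain ⟨BH, hBH⟩ : ∃ BH, BH = Bop n l0 l1 l2 H := ⟨_, rfl⟩
  obtain ⟨D, hD⟩ : ∃ D, D = conjRecip n BH := ⟨_, rfl⟩
  obtain ⟨F, hF⟩ : ∃ F, F = dilate R P - C α * P := ⟨_, rfl⟩
  obtain ⟨A, hA⟩ : ∃ A, A = Bop n l0 l1 l2 F := ⟨_, rfl⟩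
  have hBHne : ∀ w : ℂ, 1 ≤ Complex.abs w → BH.eval w ≠ 0 := by
    intro w hw
    rw [hBH, hH]
    exact BnAux.Bop_Y_ne_zero hn hB hPsdeg hPsout hα hR hw
  have hΛ := BnAux.Lam_ne_zero hn hB
  have hRn : (1:ℝ) < R^n := one_lt_pow₀ hR (by omega)
  have hRa : (R:ℂ)^n - α ≠ 0 := by
    intro h
    have h2 : α = (R:ℂ)^n := by linear_combination -h
    rw [h2, ← Complex.ofReal_pow, Complex.abs_ofReal, abs_of_pos (by linarith)] at hα
    linarith
  have hHtop : H.coeff n = ((R:ℂ)^n - α) * (starRingEnd ℂ) (P.coeff 0) := by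
    rw [hH, coeff_sub, BnAux.coeff_dilate, coeff_C_mul, hPstop]
    ring
  have hHdegle : H.natDegree ≤ n := by
    rw [hH]
    apply le_trans (natDegree_sub_le _ _)
    apply max_le
    · exact le_trans (BnAux.natDegree_dilate_le R Ps) hPsdegle
    · exact le_trans (natDegree_C_mul_le _ _) hPsdegle
  have hBHdegle : BH.natDegree ≤ n := by
    rw [hBH]; exact BnAux.natDegree_Bop_le n l0 l1 l2 H hHdegle
  have hDne : ∀ ζ : ℂ, Complex.abs ζ ≤ 1 → D.eval ζ ≠ 0 := by
    intro ζ hζ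
    rcases eq_or_ne ζ 0 with rfl | hζ0
    · rw [← coeff_zero_eq_eval_zero, hD, BnAux.coeff_conjRecip n BH (Nat.zero_le n),
        Nat.sub_zero, hBH, BnAux.Bop_coeff_top, hHtop]
      rw [hconj0]
      exact mul_ne_zero hΛ (mul_ne_zero hRa ((hconj0 _).mpr hp0))
    · rw [hD, BnAux.eval_conjRecip n BH hBHdegle hζ0]
      apply mul_ne_zero (pow_ne_zero n hζ0)
      rw [hconj0]
      apply hBHne
      rw [map_inv₀, Complex.abs_conj]
      rw [le_inv_comm₀ (by norm_num) (Complex.abs.pos hζ0)]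
      simpa using hζ
  -- circle inequality
  have hcirc : ∀ ζ : ℂ, Complex.abs ζ = 1 →
      Complex.abs (A.eval ζ) ≤ Complex.abs (D.eval ζ) := by
    intro ζ hζ
    have hζ0 : ζ ≠ 0 := by
      intro h; rw [h] at hζ; simp at hζ
    have hζ1 : 1 ≤ Complex.abs ζ := le_of_eq hζ.symm
    have hDabs : Complex.abs (D.eval ζ) = Complex.abs (BH.eval ζ) := by
      rw [hD, BnAux.eval_conjRecip n BH hBHdegle hζ0]
      have hmul1 : (starRingEnd ℂ) ζ * ζ = 1 := by
        rw [mul_comm, Complex.mul_conj]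
        rw [Complex.normSq_eq_abs, hζ]
        norm_num
      have hinv : ((starRingEnd ℂ) ζ)⁻¹ = ζ := inv_eq_of_mul_eq_one_right hmul1
      rw [hinv, map_mul, map_pow, hζ, one_pow, one_mul, Complex.abs_conj]
    rw [hDabs]
    by_contra hgt
    push_neg at hgt
    have hBHζ : BH.eval ζ ≠ 0 := hBHne ζ hζ1
    obtain ⟨δ, hδ⟩ : ∃ δ, δ = A.eval ζ / BH.eval ζ := ⟨_, rfl⟩
    have hδ1 : 1 < Complex.abs δ := by
      rw [hδ, map_div₀, lt_div_iff₀ (Complex.abs.pos hBHζ), one_mul]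
      exact hgt
    obtain ⟨W, hW⟩ : ∃ W, W = P - C δ * Ps := ⟨_, rfl⟩
    have hWout : ∀ x : ℂ, 1 < Complex.abs x → W.eval x ≠ 0 := by
      intro x hx
      have h1 := hPle x hx.le
      have h2 : Ps.eval x ≠ 0 := hPsout x hx
      rw [hW, eval_sub, eval_mul, eval_C]
      intro h0
      have h3 : P.eval x = δ * Ps.eval x := by linear_combination h0
      have h4 : Complex.abs (P.eval x) = Complex.abs δ * Complex.abs (Ps.eval x) := by
        rw [h3, map_mul]
      nlinarith [Complex.abs.pos h2]
    have hWtop : W.coeff n ≠ 0 := by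
      rw [hW, coeff_sub, coeff_C_mul, hPstop]
      intro h0
      have h3 : P.coeff n = δ * (starRingEnd ℂ) (P.coeff 0) := by linear_combination h0
      have h4 : Complex.abs (P.coeff n)
          = Complex.abs δ * Complex.abs (P.coeff 0) := by
        rw [h3, map_mul, Complex.abs_conj]
      nlinarith [Complex.abs.pos hp0]
    have hWdeg : W.natDegree = n := by
      apply le_antisymm
      · rw [hW]
        apply le_trans (natDegree_sub_le _ _)
        exact max_le hPdeg (le_trans (natDegree_C_mul_le _ _) hPsdegle)
      · exact le_natDegree_of_ne_zero hWtop
    have hkey := BnAux.Bop_Y_ne_zero hn hB hWdeg hWout hα hR hζ1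
    apply hkey
    have hpoly : dilate R W - C α * W = F - C δ * H := by
      rw [hW, hF, hH, BnAux.dilate_sub]
      ring
    rw [hpoly, BnAux.Bop_sub, eval_sub, eval_mul, eval_C, ← hA, ← hBH, hδ]
    field_simp
    ring
  -- strict inequality at the origin
  have h0lt : Complex.abs (A.eval 0) < Complex.abs (D.eval 0) := by
    have hA0 : A.eval 0 = l0 * ((1 - α) * P.coeff 0) := by
      rw [← coeff_zero_eq_eval_zero, hA, BnAux.Bop_coeff, hF, coeff_sub,
        BnAux.coeff_dilate, coeff_C_mul]
      push_cast
      ring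
    have hD0 : D.eval 0 = (starRingEnd ℂ) (Lam n l0 l1 l2 * (((R:ℂ)^n - α) * (starRingEnd ℂ) (P.coeff 0))) := by
      rw [← coeff_zero_eq_eval_zero, hD, BnAux.coeff_conjRecip n BH (Nat.zero_le n),
        Nat.sub_zero, hBH, BnAux.Bop_coeff_top, hHtop]
    rw [hA0, hD0, Complex.abs_conj, map_mul, map_mul, map_mul, map_mul, Complex.abs_conj]
    have hlt1 : Complex.abs (1 - α) < Complex.abs ((R:ℂ)^n - α) := by
      have := BnAux.abs_one_sub_lt hα hRn
      rwa [Complex.ofReal_pow] at this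
    have hle2 := BnAux.abs_l0_le_Lam hn hB
    have hΛpos : 0 < Complex.abs (Lam n l0 l1 l2) := Complex.abs.pos hΛ
    have hp0pos : 0 < Complex.abs (P.coeff 0) := Complex.abs.pos hp0
    calc Complex.abs l0 * (Complex.abs (1-α) * Complex.abs (P.coeff 0))
        ≤ Complex.abs (Lam n l0 l1 l2) * (Complex.abs (1-α) * Complex.abs (P.coeff 0)) := by
          apply mul_le_mul_of_nonneg_right hle2 (by positivity)
      _ < Complex.abs (Lam n l0 l1 l2) * (Complex.abs ((R:ℂ)^n - α) * Complex.abs (P.coeff 0)) := by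
          apply mul_lt_mul_of_pos_left ?_ hΛpos
          exact mul_lt_mul_of_pos_right hlt1 hp0pos
  -- maximum modulus
  have hfin := BnAux.max_mod hDne hcirc h0lt hz
  have hAeq : A.eval z = (Bop n l0 l1 l2 (dilate R P)).eval z - α * (Bop n l0 l1 l2 P).eval z := by
    rw [hA, hF, BnAux.Bop_sub, eval_sub, eval_mul, eval_C]
  have hDeq : D.eval z = (conjRecip n (Bop n l0 l1 l2 (dilate R (conjRecip n P)))).eval z
      - (starRingEnd ℂ) α * (conjRecip n (Bop n l0 l1 l2 (conjRecip n P))).eval z := by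
    rw [hD, hBH, hH, BnAux.Bop_sub, BnAux.conjRecip_sub, eval_sub, eval_mul, eval_C, hPs]
  rw [hAeq, hDeq] at hfin
  exact hfin
end

section
/- If Q is a complex polynomial of degree exactly n ≥ 1 all of whose zeros lie in |z| ≤ 1, then for every complex number α with |α| ≤ 1 and every R > 1, all the zeros of the polynomial z ↦ Q(Rz) − α·Q(z) lie in |z| < 1. -/
private lemma abs_sub_lt_abs_smul_sub (R : ℝ) (hR : 1 < R) (z r : ℂ)
    (hz : 1 ≤ ‖z‖) (hr : ‖r‖ ≤ 1) :
    ‖(z - r)‖ < ‖((R : ℂ) * z - r)‖ := by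
  have hz2 : 1 ≤ Complex.normSq z := by
    rw [← Complex.sq_norm]; nlinarith [norm_nonneg z]
  have hr2 : Complex.normSq r ≤ 1 := by
    rw [← Complex.sq_norm]; nlinarith [norm_nonneg r]
  rw [Complex.norm_def, Complex.norm_def]
  apply Real.sqrt_lt_sqrt (Complex.normSq_nonneg _)
  simp only [Complex.normSq_apply, Complex.sub_re, Complex.sub_im, Complex.mul_re,
    Complex.mul_im, Complex.ofReal_re, Complex.ofReal_im] at *
  nlinarith [sq_nonneg (z.re * r.im - z.im * r.re),
    sq_nonneg (z.re * r.re + z.im * r.im - 1),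
    mul_pos (sub_pos.2 hR) (sub_pos.2 hR),
    mul_nonneg (le_of_lt (sub_pos.2 hR)) (sub_nonneg.2 hz2)]

private lemma prod_map_le_prod_map' (s : Multiset ℂ) (f g : ℂ → ℝ)
    (h0 : ∀ r ∈ s, 0 ≤ f r) (h : ∀ r ∈ s, f r ≤ g r) :
    (s.map f).prod ≤ (s.map g).prod := by
  induction s using Multiset.induction with
  | empty => simp
  | cons a t ih =>
    simp only [Multiset.map_cons, Multiset.prod_cons]
    have hf0 : ∀ r ∈ t, 0 ≤ f r := fun r hr => h0 r (Multiset.mem_cons_of_mem hr)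
    have hfg : ∀ r ∈ t, f r ≤ g r := fun r hr => h r (Multiset.mem_cons_of_mem hr)
    have hpf : 0 ≤ (t.map f).prod :=
      Multiset.prod_nonneg (by intro x hx; obtain ⟨r, hr, rfl⟩ := Multiset.mem_map.1 hx; exact hf0 r hr)
    exact mul_le_mul (h a (Multiset.mem_cons_self a t)) (ih hf0 hfg) hpf
      (le_trans (h0 a (Multiset.mem_cons_self a t)) (h a (Multiset.mem_cons_self a t)))

private lemma prod_map_lt_prod_map (s : Multiset ℂ) (hs : s ≠ 0) (f g : ℂ → ℝ)
    (h0 : ∀ r ∈ s, 0 ≤ f r) (h : ∀ r ∈ s, f r < g r) :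
    (s.map f).prod < (s.map g).prod := by
  obtain ⟨a, ha⟩ := Multiset.exists_mem_of_ne_zero hs
  obtain ⟨t, rfl⟩ := Multiset.exists_cons_of_mem ha
  simp only [Multiset.map_cons, Multiset.prod_cons]
  have hf0 : ∀ r ∈ t, 0 ≤ f r := fun r hr => h0 r (Multiset.mem_cons_of_mem hr)
  have hpf : 0 ≤ (t.map f).prod :=
    Multiset.prod_nonneg (by intro x hx; obtain ⟨r, hr, rfl⟩ := Multiset.mem_map.1 hx; exact hf0 r hr)
  have hple : (t.map f).prod ≤ (t.map g).prod :=
    prod_map_le_prod_map' t f g hf0 (fun r hr => le_of_lt (h r (Multiset.mem_cons_of_mem hr)))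
  have hga : 0 < g a := lt_of_le_of_lt (h0 a (Multiset.mem_cons_self a t)) (h a (Multiset.mem_cons_self a t))
  have hpg : 0 < (t.map g).prod := by
    apply Multiset.prod_pos
    intro x hx; obtain ⟨r, hr, rfl⟩ := Multiset.mem_map.1 hx
    exact lt_of_le_of_lt (hf0 r hr) (h r (Multiset.mem_cons_of_mem hr))
  calc f a * (t.map f).prod ≤ f a * (t.map g).prod :=
        mul_le_mul_of_nonneg_left hple (h0 a (Multiset.mem_cons_self a t))
    _ < g a * (t.map g).prod :=
        mul_lt_mul_of_pos_right (h a (Multiset.mem_cons_self a t)) hpg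

/-- if all zeros of `Q` (of degree exactly `n ≥ 1`) lie in the closed
unit disk, then all zeros of `z ↦ Q(Rz) − α·Q(z)` lie in the open unit disk. -/
theorem zeros_of_dilated_difference
    (n : ℕ) (hn : 1 ≤ n) (Q : Polynomial ℂ) (hdeg : Q.degree = (n : ℕ))
    (hQ : ∀ z : ℂ, Q.IsRoot z → ‖z‖ ≤ 1)
    (α : ℂ) (hα : ‖α‖ ≤ 1) (R : ℝ) (hR : 1 < R) :
    ∀ z : ℂ, Q.eval ((R : ℂ) * z) - α * Q.eval z = 0 → ‖z‖ < 1 := by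
  intro z heq
  by_contra hcon
  push_neg at hcon
  have hQ0 : Q ≠ 0 := fun h => by simp [h] at hdeg
  have hc : Q.leadingCoeff ≠ 0 := Polynomial.leadingCoeff_ne_zero.2 hQ0
  have hsplit : Q = Polynomial.C Q.leadingCoeff *
      (Q.roots.map fun a => Polynomial.X - Polynomial.C a).prod :=
    (Polynomial.C_leadingCoeff_mul_prod_multiset_X_sub_C ((Polynomial.splits_iff_card_roots).1 (IsAlgClosed.splits Q))).symm
  have hcard : Q.roots ≠ 0 := by
    have : Q.roots.card = Q.natDegree :=
      (Polynomial.splits_iff_card_roots).1 (IsAlgClosed.splits Q)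
    intro h
    rw [h] at this
    have hnd : Q.natDegree = n := Polynomial.natDegree_eq_of_degree_eq_some hdeg
    simp [hnd] at this
    omega
  have heval : ∀ w : ℂ, ‖(Q.eval w)‖ =
      ‖Q.leadingCoeff‖ * (Q.roots.map fun r => ‖(w - r)‖).prod := by
    intro w
    conv_lhs => rw [hsplit]
    rw [Polynomial.eval_mul, Polynomial.eval_C, norm_mul, Polynomial.eval_multiset_prod,
      Multiset.map_map, (show ‖(_ : Multiset ℂ).prod‖ = _ from map_multiset_prod (normHom : ℂ →*₀ ℝ) _), Multiset.map_map]
    simp [Function.comp]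
  have key : (Q.roots.map fun r => ‖(z - r)‖).prod <
      (Q.roots.map fun r => ‖((R : ℂ) * z - r)‖).prod := by
    apply prod_map_lt_prod_map Q.roots hcard
    · intro r _; exact norm_nonneg _
    · intro r hr
      exact abs_sub_lt_abs_smul_sub R hR z r hcon (hQ r (Polynomial.isRoot_of_mem_roots hr))
  have hlt : ‖(Q.eval z)‖ < ‖Q.eval ((R : ℂ) * z)‖ := by
    rw [heval, heval]
    exact mul_lt_mul_of_pos_left key (norm_pos_iff.2 hc)
  have heq2 : Q.eval ((R : ℂ) * z) = α * Q.eval z := by linear_combination heq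
  rw [heq2, norm_mul] at hlt
  nlinarith [norm_nonneg (Q.eval z), norm_nonneg α]
end
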